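/- arXiv:math/0008181 — 7 statements merged into one kernel-verified Lean document; each statement's English description precedes it below -/
import Mathlib

section
/- Let H be a Hilbert space, T ∈ B(H) with ‖T‖ ≤ 1, let χ ⊂ H be a finite set, R the orthogonal projection onto K = span(χ), and let ε > 0. Suppose Q is a finite rank projection with ‖[Q,T]‖ < ε and ‖Q(x) - x‖ < ε for all x in an ε-dense subset of the unit ball of K. Then ‖(1-R)QR‖ < 3ε, and the positive contraction X = RQR + (1-R)Q(1-R) satisfies ‖Q - X‖ < 3ε. -/
open Filter Topology

/-- `P` is a finite rank orthogonal projection on the Hilbert space `H`. -/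
def IsFinRankProj {H : Type*} [NormedAddCommGroup H] [InnerProductSpace ℂ H]
    (P : H →L[ℂ] H) : Prop :=
  P ∘L P = P ∧ (∀ x y : H, (inner ℂ (P x) y : ℂ) = inner ℂ x (P y)) ∧
    FiniteDimensional ℂ (LinearMap.range P.toLinearMap)

local notation "⟪" x ", " y "⟫" => @inner ℂ _ _ x y

/-- A self-adjoint idempotent is a contraction. -/
lemma proj_apply_norm_le {H : Type*} [NormedAddCommGroup H] [InnerProductSpace ℂ H]
    (P : H →L[ℂ] H) (hP : P ∘L P = P)
    (hsa : ∀ x y : H, (inner ℂ (P x) y : ℂ) = inner ℂ x (P y)) (v : H) : ‖P v‖ ≤ ‖v‖ := by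
  have hPP : ∀ x : H, P (P x) = P x := fun x => congrFun (congrArg DFunLike.coe hP) x
  have h1 : ⟪P v, P v⟫ = ⟪v, P v⟫ := by
    rw [hsa v (P v), hPP]
  have h2 : (‖P v‖ : ℝ) ^ 2 = RCLike.re (K := ℂ) ⟪v, P v⟫ :=
    (h1 ▸ inner_self_eq_norm_sq (𝕜 := ℂ) (P v)).symm
  have h3 : RCLike.re (K := ℂ) ⟪v, P v⟫ ≤ ‖v‖ * ‖P v‖ := by
    calc RCLike.re (K := ℂ) ⟪v, P v⟫ ≤ |RCLike.re (K := ℂ) ⟪v, P v⟫| := le_abs_self _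
      _ ≤ ‖⟪v, P v⟫‖ := RCLike.abs_re_le_norm _
      _ ≤ ‖v‖ * ‖P v‖ := norm_inner_le_norm _ _
  nlinarith [norm_nonneg (P v), norm_nonneg v]

/-- Let `T` be a contraction, `χ` a finite set spanning `K`, `R` the orthogonal projection
onto `K`, and `Q` a finite rank projection almost commuting with `T` and almost fixing an
`ε`-dense subset `S` of the unit ball of `K`.  Then `‖(1-R)QR‖ < 3ε` and
`X = RQR + (1-R)Q(1-R)` satisfies `‖Q - X‖ < 3ε`. -/
theorem corner_estimate {H : Type*} [NormedAddCommGroup H] [InnerProductSpace ℂ H]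
    (T : H →L[ℂ] H) (hT : ‖T‖ ≤ 1) (χ : Finset H) (ε : ℝ) (hε : 0 < ε)
    (R Q : H →L[ℂ] H)
    (hRproj : R ∘L R = R) (hRsa : ∀ x y : H, (inner ℂ (R x) y : ℂ) = inner ℂ x (R y))
    (hRrange : LinearMap.range R.toLinearMap = Submodule.span ℂ (χ : Set H))
    (hQ : IsFinRankProj Q)
    (hQT : ‖Q ∘L T - T ∘L Q‖ < ε)
    (S : Set H)
    (hS : S ⊆ {x : H | x ∈ Submodule.span ℂ (χ : Set H) ∧ ‖x‖ ≤ 1})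
    (hSdense : ∀ y ∈ Submodule.span ℂ (χ : Set H), ‖y‖ ≤ 1 → ∃ x ∈ S, ‖y - x‖ ≤ ε)
    (hQS : ∀ x ∈ S, ‖Q x - x‖ < ε) :
    ‖(1 - R) ∘L Q ∘L R‖ < 3 * ε ∧
      ‖Q - (R ∘L Q ∘L R + (1 - R) ∘L Q ∘L (1 - R))‖ < 3 * ε := by
  obtain ⟨hQproj, hQsa, -⟩ := hQ
  set R' : H →L[ℂ] H := 1 - R with hR'def
  have hRR : ∀ x : H, R (R x) = R x := fun x => congrFun (congrArg DFunLike.coe hRproj) x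
  have hR'proj : R' ∘L R' = R' := by
    ext x
    simp [hR'def, hRR x]
  have hR'sa : ∀ x y : H, ⟪R' x, y⟫ = ⟪x, R' y⟫ := by
    intro x y
    simp only [hR'def, ContinuousLinearMap.sub_apply, ContinuousLinearMap.one_apply,
      inner_sub_left, inner_sub_right, hRsa]
  -- elements of span χ are fixed by R
  have hfix : ∀ x : H, x ∈ Submodule.span ℂ (χ : Set H) → R x = x := by
    intro x hx
    rw [← hRrange] at hx
    obtain ⟨v, hv⟩ := hx
    rw [← hv]
    exact hRR v
  have hRnorm := proj_apply_norm_le R hRproj hRsa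
  have hR'norm := proj_apply_norm_le R' hR'proj hR'sa
  have hQnorm := proj_apply_norm_le Q hQproj hQsa
  -- key estimate on span χ
  have hL : ∀ z ∈ Submodule.span ℂ (χ : Set H), ‖R' (Q z)‖ ≤ 2 * ε * ‖z‖ := by
    intro z hz
    rcases eq_or_ne z 0 with rfl | hz0
    · simp
    have hc : (0:ℝ) < ‖z‖ := norm_pos_iff.mpr hz0
    set w : H := (‖z‖ : ℂ)⁻¹ • z with hw
    have hwspan : w ∈ Submodule.span ℂ (χ : Set H) := Submodule.smul_mem _ _ hz
    have hwnorm : ‖w‖ = 1 := by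
      rw [hw, norm_smul]
      simp [hc.ne']
    obtain ⟨x, hxS, hwx⟩ := hSdense w hwspan hwnorm.le
    have hx1 := (hS hxS).1
    have hR'x : R' x = 0 := by
      simp [hR'def, hfix x hx1]
    have hsplit : R' (Q w) = R' (Q (w - x)) + R' (Q x - x) := by
      simp only [map_sub, hR'x]
      abel
    have h1 : ‖R' (Q (w - x))‖ ≤ ε :=
      le_trans (hR'norm _) (le_trans (hQnorm _) hwx)
    have h2 : ‖R' (Q x - x)‖ ≤ ε := le_trans (hR'norm _) (hQS x hxS).le
    have hQw : ‖R' (Q w)‖ ≤ 2 * ε := by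
      calc ‖R' (Q w)‖ ≤ ‖R' (Q (w - x))‖ + ‖R' (Q x - x)‖ := by
            rw [hsplit]; exact norm_add_le _ _
        _ ≤ 2 * ε := by linarith
    have hzw : z = (‖z‖ : ℂ) • w := by
      rw [hw, smul_smul]
      rw [mul_inv_cancel₀ (by exact_mod_cast hc.ne')]
      simp
    calc ‖R' (Q z)‖ = ‖z‖ * ‖R' (Q w)‖ := by
          conv_lhs => rw [hzw]
          rw [map_smul, map_smul, norm_smul]
          simp
      _ ≤ ‖z‖ * (2 * ε) := by
          exact mul_le_mul_of_nonneg_left hQw hc.le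
      _ = 2 * ε * ‖z‖ := by ring
  set A : H →L[ℂ] H := R' ∘L Q ∘L R with hA
  set B : H →L[ℂ] H := R ∘L Q ∘L R' with hB
  have hRmem : ∀ u : H, R u ∈ Submodule.span ℂ (χ : Set H) := by
    intro u
    rw [← hRrange]
    exact ⟨u, rfl⟩
  have hAu : ∀ u : H, ‖A u‖ ≤ 2 * ε * ‖R u‖ := fun u => hL (R u) (hRmem u)
  have hBu : ∀ u : H, ‖B u‖ ≤ 2 * ε * ‖R' u‖ := by
    intro u
    have hBmem : B u ∈ Submodule.span ℂ (χ : Set H) := hRmem (Q (R' u))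
    have hBfix : R (B u) = B u := hfix _ hBmem
    have key : ⟪B u, B u⟫ = ⟪R' u, R' (Q (B u))⟫ := by
      calc ⟪B u, B u⟫ = ⟪Q (R' u), R (B u)⟫ := hRsa _ _
        _ = ⟪Q (R' u), B u⟫ := by rw [hBfix]
        _ = ⟪R' u, Q (B u)⟫ := hQsa _ _
        _ = ⟪R' (R' u), Q (B u)⟫ := by
            have hRRu : R' (R' u) = R' u := congrFun (congrArg DFunLike.coe hR'proj) u
            rw [hRRu]
        _ = ⟪R' u, R' (Q (B u))⟫ := hR'sa _ _
    have h1 : (‖B u‖ : ℝ) ^ 2 = RCLike.re (K := ℂ) ⟪R' u, R' (Q (B u))⟫ :=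
      (key ▸ inner_self_eq_norm_sq (𝕜 := ℂ) (B u)).symm
    have h2 : RCLike.re (K := ℂ) ⟪R' u, R' (Q (B u))⟫ ≤ ‖R' u‖ * ‖R' (Q (B u))‖ :=
      le_trans (le_abs_self _) (le_trans (RCLike.abs_re_le_norm _) (norm_inner_le_norm _ _))
    have h3 : ‖R' (Q (B u))‖ ≤ 2 * ε * ‖B u‖ := hL _ hBmem
    have h4 : (‖B u‖ : ℝ) ^ 2 ≤ ‖R' u‖ * (2 * ε * ‖B u‖) := by
      calc (‖B u‖ : ℝ) ^ 2 ≤ ‖R' u‖ * ‖R' (Q (B u))‖ := h1 ▸ h2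
        _ ≤ ‖R' u‖ * (2 * ε * ‖B u‖) :=
          mul_le_mul_of_nonneg_left h3 (norm_nonneg _)
    rcases eq_or_ne (B u) 0 with h | h
    · rw [h]
      simp
      positivity
    have hb : (0:ℝ) < ‖B u‖ := norm_pos_iff.mpr h
    nlinarith [norm_nonneg (R' u)]
  -- Pythagoras facts
  have hOrth : ∀ u : H, RCLike.re (K := ℂ) ⟪A u, B u⟫ = 0 := by
    intro u
    have : ⟪A u, B u⟫ = ⟪Q (R u), R' (R (Q (R' u)))⟫ := hR'sa _ _
    have hz : R' (R (Q (R' u))) = 0 := by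
      simp [hR'def, hRR]
    rw [this, hz, inner_zero_right]
    simp
  have hPyth : ∀ u : H, ‖R u‖ ^ 2 + ‖R' u‖ ^ 2 = ‖u‖ ^ 2 := by
    intro u
    have hdecu : R u + R' u = u := by simp [hR'def]
    have ho : ⟪R u, R' u⟫ = 0 := by
      rw [hRsa]
      have : R (R' u) = 0 := by simp [hR'def, hRR]
      rw [this, inner_zero_right]
    have := @norm_add_sq ℂ H _ _ _ (R u) (R' u)
    rw [hdecu, ho] at this
    simp at this
    linarith
  have hABu : ∀ u : H, ‖(A + B) u‖ ≤ 2 * ε * ‖u‖ := by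
    intro u
    have hsq : ‖(A + B) u‖ ^ 2 = ‖A u‖ ^ 2 + ‖B u‖ ^ 2 := by
      have := @norm_add_sq ℂ H _ _ _ (A u) (B u)
      rw [ContinuousLinearMap.add_apply]
      rw [this, hOrth u]
      ring
    have h1 : ‖A u‖ ^ 2 ≤ (2 * ε) ^ 2 * ‖R u‖ ^ 2 := by
      have := hAu u
      nlinarith [norm_nonneg (A u), norm_nonneg (R u)]
    have h2 : ‖B u‖ ^ 2 ≤ (2 * ε) ^ 2 * ‖R' u‖ ^ 2 := by
      have := hBu u
      nlinarith [norm_nonneg (B u), norm_nonneg (R' u)]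
    have h3 : ‖(A + B) u‖ ^ 2 ≤ (2 * ε * ‖u‖) ^ 2 := by
      rw [hsq]
      have := hPyth u
      nlinarith
    nlinarith [norm_nonneg ((A + B) u), norm_nonneg u, mul_nonneg (mul_nonneg (by norm_num : (0:ℝ) ≤ 2) hε.le) (norm_nonneg u)]
  have hAnorm : ‖A‖ ≤ 2 * ε := by
    apply ContinuousLinearMap.opNorm_le_bound _ (by positivity)
    intro u
    calc ‖A u‖ ≤ 2 * ε * ‖R u‖ := hAu u
      _ ≤ 2 * ε * ‖u‖ := mul_le_mul_of_nonneg_left (hRnorm u) (by positivity)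
  have hABnorm : ‖A + B‖ ≤ 2 * ε :=
    ContinuousLinearMap.opNorm_le_bound _ (by positivity) hABu
  have hdecomp : Q - (R ∘L Q ∘L R + (1 - R) ∘L Q ∘L (1 - R)) = A + B := by
    show Q - (R * Q * R + (1 - R) * Q * (1 - R)) = (1 - R) * Q * R + R * Q * (1 - R)
    noncomm_ring
  constructor
  · calc ‖(1 - R) ∘L Q ∘L R‖ = ‖A‖ := rfl
      _ ≤ 2 * ε := hAnorm
      _ < 3 * ε := by linarith
  · rw [hdecomp]
    calc ‖A + B‖ ≤ 2 * ε := hABnorm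
      _ < 3 * ε := by linarith
end

section
/- Let A ⊂ B(H) be a C*-algebra of operators, F ⊂ A a finite set, and ε > 0. Suppose (E_n) is a sequence of mutually orthogonal finite rank projections summing strongly to 1 such that Σ_n ‖[E_n, a]‖ < ∞ for each a in a dense subset of the unit ball of A. Then the map δ(a) = Σ_n E_n a E_n (strong operator convergent sum) is a well-defined contractive completely positive map, and for each a in the dense subset, a - δ(a) is a compact operator. -/
set_option linter.unusedSectionVars false
set_option maxHeartbeats 1000000


open Filter Topology

section Aux

variable {H : Type*} [NormedAddCommGroup H] [InnerProductSpace ℂ H] [CompleteSpace H]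

local notation "⟪" x ", " y "⟫" => @inner ℂ _ _ x y

lemma aux_hasSum_norm_sq {G : ℕ → Submodule ℂ H}
    (hO : OrthogonalFamily ℂ (fun n => G n) (fun n => (G n).subtypeₗᵢ))
    {f : ℕ → H} (hf : ∀ n, f n ∈ G n) {x : H} (h : HasSum f x) :
    HasSum (fun n => ‖f n‖ ^ 2) (‖x‖ ^ 2) := by
  have key : ∀ s : Finset ℕ, ∑ n ∈ s, ‖f n‖ ^ 2 = ‖∑ n ∈ s, f n‖ ^ 2 := by
    intro s
    have := hO.norm_sum (fun n => (⟨f n, hf n⟩ : G n)) s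
    simpa using this.symm
  have h2 : Tendsto (fun s : Finset ℕ => ‖∑ n ∈ s, f n‖ ^ 2) atTop (𝓝 (‖x‖ ^ 2)) :=
    (((continuous_pow 2).comp continuous_norm).tendsto x).comp h
  unfold HasSum
  simpa only [key, SummationFilter.unconditional_filter] using h2

lemma aux_summable {G : ℕ → Submodule ℂ H}
    (hO : OrthogonalFamily ℂ (fun n => G n) (fun n => (G n).subtypeₗᵢ))
    {f : ℕ → H} (hf : ∀ n, f n ∈ G n) (hsq : Summable fun n => ‖f n‖ ^ 2) :
    Summable f := by
  have := (hO.summable_iff_norm_sq_summable (fun n => (⟨f n, hf n⟩ : G n))).2 (by simpa using hsq)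
  simpa using this

lemma aux_isPositive_of_hasSum {T : H →L[ℂ] H} {Tn : ℕ → H →L[ℂ] H}
    (hpos : ∀ n, (Tn n).IsPositive) (h : ∀ x, HasSum (fun n => Tn n x) (T x)) :
    T.IsPositive := by
  have hsymm : ∀ n, ((Tn n : H →L[ℂ] H) : H →ₗ[ℂ] H).IsSymmetric := fun n =>
    (hpos n).1
  constructor
  · show (T : H →ₗ[ℂ] H).IsSymmetric
    intro x y
    have h1 : HasSum (fun n => ⟪x, Tn n y⟫) ⟪x, T y⟫ := (h y).mapL (innerSL ℂ x)
    have h2 : HasSum (fun n => ⟪y, Tn n x⟫) ⟪y, T x⟫ := (h x).mapL (innerSL ℂ y)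
    have h3 : HasSum (fun n => star ⟪y, Tn n x⟫) (star ⟪y, T x⟫) := h2.star
    have h4 : (fun n => star ⟪y, Tn n x⟫) = fun n => ⟪x, Tn n y⟫ := by
      funext n
      rw [show star ⟪y, Tn n x⟫ = ⟪Tn n x, y⟫ from inner_conj_symm _ _]
      exact hsymm n x y
    rw [h4] at h3
    have h5 : star ⟪y, T x⟫ = ⟪x, T y⟫ := h3.unique h1
    calc ⟪T x, y⟫ = star ⟪y, T x⟫ := (inner_conj_symm _ _).symm
    _ = ⟪x, T y⟫ := h5
  · intro x
    rw [ContinuousLinearMap.reApplyInnerSelf_apply, inner_re_symm]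
    have h1 : HasSum (fun n => ⟪x, Tn n x⟫) ⟪x, T x⟫ := (h x).mapL (innerSL ℂ x)
    have h2 : HasSum (fun n => RCLike.re ⟪x, Tn n x⟫) (RCLike.re ⟪x, T x⟫) :=
      h1.mapL RCLike.reCLM
    exact h2.nonneg fun n => (RCLike.nonneg_iff.1 ((hpos n).inner_nonneg_right x)).1

lemma aux_compact_of_fd {f : H →L[ℂ] H}
    (hfd : FiniteDimensional ℂ (LinearMap.range f.toLinearMap)) :
    IsCompactOperator ⇑f := by
  haveI := hfd
  refine ⟨(↑) '' Metric.closedBall (0 : LinearMap.range f.toLinearMap) ‖f‖,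
    (isCompact_closedBall _ _).image continuous_subtype_val, ?_⟩
  refine mem_of_superset (Metric.closedBall_mem_nhds (0 : H) zero_lt_one) ?_
  intro x hx
  rw [Metric.mem_closedBall, dist_zero_right] at hx
  refine ⟨⟨f x, LinearMap.mem_range.2 ⟨x, rfl⟩⟩, ?_, rfl⟩
  rw [Metric.mem_closedBall, dist_zero_right]
  calc ‖(⟨f x, _⟩ : LinearMap.range f.toLinearMap)‖ = ‖f x‖ := rfl
  _ ≤ ‖f‖ * ‖x‖ := f.le_opNorm x
  _ ≤ ‖f‖ * 1 := by
      exact mul_le_mul_of_nonneg_left hx (norm_nonneg f)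
  _ = ‖f‖ := mul_one _

end Aux

/-- Given mutually orthogonal finite rank projections `E n` summing strongly to `1` such
that `∑ ‖[E n, a]‖ < ∞` for all `a` in a dense subset `S` of the unit ball of a
`C*`-algebra `A ⊆ B(H)`, the map `δ(a) = ∑ₙ Eₙ a Eₙ` (strongly convergent sums) is a
well-defined contractive completely positive map, and `a - δ(a)` is compact for `a ∈ S`. -/
theorem pinching_map_ccp_and_compact_difference {H : Type*} [NormedAddCommGroup H]
    [InnerProductSpace ℂ H] [CompleteSpace H] [TopologicalSpace.SeparableSpace H]
    (A : StarSubalgebra ℂ (H →L[ℂ] H)) (hA : IsClosed (A : Set (H →L[ℂ] H)))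
    (F : Finset (H →L[ℂ] H)) (hF : ↑F ⊆ (A : Set (H →L[ℂ] H))) (ε : ℝ) (hε : 0 < ε)
    (E : ℕ → H →L[ℂ] H) (hEproj : ∀ n, IsFinRankProj (E n))
    (horth : ∀ m n, m ≠ n → E m ∘L E n = 0)
    (hsum : ∀ x : H, HasSum (fun n => E n x) x)
    (S : Set (H →L[ℂ] H)) (hSA : S ⊆ (A : Set (H →L[ℂ] H)))
    (hSball : ∀ a ∈ S, ‖a‖ ≤ 1)
    (hSdense : ∀ a ∈ A, ‖a‖ ≤ 1 → ∀ δ : ℝ, 0 < δ → ∃ b ∈ S, ‖a - b‖ ≤ δ)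
    (hsummable : ∀ a ∈ S, Summable fun n => ‖E n ∘L a - a ∘L E n‖) :
    ∃ δmap : (H →L[ℂ] H) →ₗ[ℂ] (H →L[ℂ] H),
      (∀ (a : H →L[ℂ] H) (x : H), HasSum (fun n => (E n ∘L a ∘L E n) x) (δmap a x)) ∧
      (∀ a : H →L[ℂ] H, ‖δmap a‖ ≤ ‖a‖) ∧
      (∀ (k : ℕ) (a c : Fin k → (H →L[ℂ] H)),
        (∑ i, ∑ j, star (c i) * δmap (star (a i) * a j) * c j).IsPositive) ∧
      ∀ a ∈ S, IsCompactOperator ⇑(a - δmap a) := by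
    classical
  -- basic facts about the projections
  have Eidem : ∀ n, E n ∘L E n = E n := fun n => (hEproj n).1
  have Esa : ∀ n (x y : H), (inner ℂ (E n x) y : ℂ) = inner ℂ x (E n y) := fun n => (hEproj n).2.1
  have EappIdem : ∀ n (y : H), E n (E n y) = E n y := by
    intro n y
    have := DFunLike.congr_fun (Eidem n) y
    simpa using this
  have EnormLe : ∀ n (y : H), ‖E n y‖ ≤ ‖y‖ := by
    intro n y
    rcases eq_or_lt_of_le (norm_nonneg (E n y)) with h0 | h0
    · rw [← h0]; exact norm_nonneg y
    have h1 : ‖E n y‖ ^ 2 = RCLike.re (inner ℂ (E n y) (E n y) : ℂ) := by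
      rw [inner_self_eq_norm_sq]
    have h2 : (inner ℂ (E n y) (E n y) : ℂ) = inner ℂ y (E n y) := by
      rw [Esa n, EappIdem]
    have h3 : ‖E n y‖ ^ 2 ≤ ‖y‖ * ‖E n y‖ := by
      rw [h1, h2]
      calc RCLike.re (inner ℂ y (E n y) : ℂ) ≤ ‖(inner ℂ y (E n y) : ℂ)‖ := RCLike.re_le_norm _
      _ ≤ ‖y‖ * ‖E n y‖ := norm_inner_le_norm _ _
    nlinarith
  have Enorm : ∀ n, ‖E n‖ ≤ 1 := fun n =>
    ContinuousLinearMap.opNorm_le_bound _ zero_le_one (fun y => by simpa using EnormLe n y)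
  have Estar : ∀ n, star (E n) = E n := by
    intro n
    rw [ContinuousLinearMap.star_eq_adjoint]
    exact (((ContinuousLinearMap.eq_adjoint_iff (E n) (E n)).2 (Esa n))).symm
  -- orthogonal family of ranges
  set R : ℕ → Submodule ℂ H := fun n => LinearMap.range (E n).toLinearMap with hR
  have hmem : ∀ n (y : H), E n y ∈ R n := fun n y => LinearMap.mem_range.2 ⟨y, rfl⟩
  have hO : OrthogonalFamily ℂ (fun n => R n) (fun n => (R n).subtypeₗᵢ) := by
    intro m n hmn v w
    obtain ⟨u, hu⟩ := LinearMap.mem_range.1 v.2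
    obtain ⟨z, hz⟩ := LinearMap.mem_range.1 w.2
    show (inner ℂ (v : H) (w : H) : ℂ) = 0
    rw [← hu, ← hz]
    have : E m (E n z) = 0 := by
      have := DFunLike.congr_fun (horth m n hmn) z
      simpa using this
    calc (inner ℂ (E m u) (E n z) : ℂ) = inner ℂ u (E m (E n z)) := Esa m _ _
    _ = 0 := by rw [this, inner_zero_right]
  have Parseval : ∀ x : H, HasSum (fun n => ‖E n x‖ ^ 2) (‖x‖ ^ 2) := fun x =>
    aux_hasSum_norm_sq hO (fun n => hmem n x) (hsum x)
  -- termwise bound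
  have termle : ∀ (a : H →L[ℂ] H) (x : H) (n : ℕ),
      ‖(E n ∘L a ∘L E n) x‖ ^ 2 ≤ ‖a‖ ^ 2 * ‖E n x‖ ^ 2 := by
    intro a x n
    have h1 : ‖(E n ∘L a ∘L E n) x‖ ≤ ‖a‖ * ‖E n x‖ := by
      calc ‖E n (a (E n x))‖ ≤ ‖a (E n x)‖ := EnormLe n _
      _ ≤ ‖a‖ * ‖E n x‖ := a.le_opNorm _
    calc ‖(E n ∘L a ∘L E n) x‖ ^ 2 ≤ (‖a‖ * ‖E n x‖) ^ 2 :=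
      pow_le_pow_left₀ (norm_nonneg _) h1 2
    _ = ‖a‖ ^ 2 * ‖E n x‖ ^ 2 := mul_pow _ _ _
  have hmem' : ∀ (a : H →L[ℂ] H) (x : H) (n : ℕ), (E n ∘L a ∘L E n) x ∈ R n := by
    intro a x n
    exact hmem n _
  have hSummApp : ∀ (a : H →L[ℂ] H) (x : H), Summable fun n => (E n ∘L a ∘L E n) x := by
    intro a x
    refine aux_summable hO (hmem' a x) ?_
    exact Summable.of_nonneg_of_le (fun n => sq_nonneg _) (termle a x)
      (((Parseval x).summable).mul_left (‖a‖ ^ 2))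
  set dfun : (H →L[ℂ] H) → H → H := fun a x => ∑' n, (E n ∘L a ∘L E n) x with hdfun
  have hHas : ∀ (a : H →L[ℂ] H) (x : H),
      HasSum (fun n => (E n ∘L a ∘L E n) x) (dfun a x) := fun a x => (hSummApp a x).hasSum
  have hbound : ∀ (a : H →L[ℂ] H) (x : H), ‖dfun a x‖ ≤ ‖a‖ * ‖x‖ := by
    intro a x
    have h1 : HasSum (fun n => ‖(E n ∘L a ∘L E n) x‖ ^ 2) (‖dfun a x‖ ^ 2) :=
      aux_hasSum_norm_sq hO (hmem' a x) (hHas a x)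
    have h2 : HasSum (fun n => ‖a‖ ^ 2 * ‖E n x‖ ^ 2) (‖a‖ ^ 2 * ‖x‖ ^ 2) :=
      (Parseval x).mul_left _
    have h3 : ‖dfun a x‖ ^ 2 ≤ (‖a‖ * ‖x‖) ^ 2 := by
      rw [mul_pow]
      exact hasSum_le (termle a x) h1 h2
    exact (pow_le_pow_iff_left₀ (norm_nonneg _) (by positivity) two_ne_zero).1 h3
  have hadd : ∀ (a : H →L[ℂ] H) (x y : H), dfun a (x + y) = dfun a x + dfun a y := by
    intro a x y
    have : HasSum (fun n => (E n ∘L a ∘L E n) (x + y)) (dfun a x + dfun a y) := by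
      simpa only [map_add] using (hHas a x).add (hHas a y)
    exact this.tsum_eq
  have hsmul : ∀ (a : H →L[ℂ] H) (c : ℂ) (x : H), dfun a (c • x) = c • dfun a x := by
    intro a c x
    have : HasSum (fun n => (E n ∘L a ∘L E n) (c • x)) (c • dfun a x) := by
      simpa only [map_smul] using (hHas a x).const_smul c
    exact this.tsum_eq
  -- package as a continuous linear map for each a
  set δc : (H →L[ℂ] H) → (H →L[ℂ] H) := fun a =>
    LinearMap.mkContinuous
      { toFun := dfun a
        map_add' := hadd a
        map_smul' := hsmul a } ‖a‖ (hbound a) with hδc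
  have hδapp : ∀ (a : H →L[ℂ] H) (x : H), δc a x = dfun a x := fun a x => rfl
  have hδHas : ∀ (a : H →L[ℂ] H) (x : H),
      HasSum (fun n => (E n ∘L a ∘L E n) x) (δc a x) := fun a x => hHas a x
  set δmap : (H →L[ℂ] H) →ₗ[ℂ] (H →L[ℂ] H) :=
    { toFun := δc
      map_add' := by
        intro a b
        ext x
        have h1 : HasSum (fun n => (E n ∘L (a + b) ∘L E n) x) (δc a x + δc b x) := by
          have := (hδHas a x).add (hδHas b x)
          simpa only [ContinuousLinearMap.comp_apply, ContinuousLinearMap.add_apply,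
            map_add] using this
        rw [ContinuousLinearMap.add_apply]
        exact (hδHas (a + b) x).unique h1
      map_smul' := by
        intro c a
        ext x
        have h1 : HasSum (fun n => (E n ∘L (c • a) ∘L E n) x) (c • δc a x) := by
          have := (hδHas a x).const_smul c
          simpa only [ContinuousLinearMap.comp_apply, ContinuousLinearMap.smul_apply,
            map_smul] using this
        rw [ContinuousLinearMap.smul_apply]
        exact (hδHas (c • a) x).unique h1 } with hδmap
  refine ⟨δmap, fun a x => hδHas a x, ?_, ?_, ?_⟩
  · intro a
    exact LinearMap.mkContinuous_norm_le _ (norm_nonneg a) (hbound a)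
  · -- complete positivity
    intro k a c
    set T := ∑ i, ∑ j, star (c i) * δmap (star (a i) * a j) * c j with hT
    set Tn : ℕ → H →L[ℂ] H := fun n =>
      ∑ i, ∑ j, star (c i) * E n * (star (a i) * a j) * E n * c j with hTn
    have hTnHas : ∀ x : H, HasSum (fun n => Tn n x) (T x) := by
      intro x
      have h1 : HasSum
          (fun n => ∑ i, ∑ j, (star (c i)) ((E n ∘L (star (a i) * a j) ∘L E n) ((c j) x)))
          (∑ i, ∑ j, (star (c i)) (δmap (star (a i) * a j) ((c j) x))) := by
        refine hasSum_sum fun i _ => hasSum_sum fun j _ => ?_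
        exact (hδHas (star (a i) * a j) ((c j) x)).mapL (star (c i))
      convert h1 using 2 with n
      · simp [hTn, ContinuousLinearMap.mul_apply, ContinuousLinearMap.sum_apply,
          ContinuousLinearMap.comp_apply]
      · simp [hT, ContinuousLinearMap.mul_apply, ContinuousLinearMap.sum_apply]
    have hTnpos : ∀ n, (Tn n).IsPositive := by
      intro n
      set W : H →L[ℂ] H := ∑ j, a j * E n * c j with hW
      have hTneq : Tn n = star W * W := by
        rw [hW, hTn]
        rw [star_sum]
        rw [Finset.sum_mul_sum]
        refine Finset.sum_congr rfl fun i _ => Finset.sum_congr rfl fun j _ => ?_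
        simp only [star_mul, Estar n]
        simp [mul_assoc]
      rw [hTneq]
      have := ContinuousLinearMap.IsPositive.adjoint_conj (T := (1 : H →L[ℂ] H)) ContinuousLinearMap.isPositive_one W
      simpa only [ContinuousLinearMap.one_def, ContinuousLinearMap.id_comp,
        ContinuousLinearMap.star_eq_adjoint, ContinuousLinearMap.mul_def] using this
    exact aux_isPositive_of_hasSum hTnpos hTnHas
  · -- compactness of a - δ a for a ∈ S
    intro a ha
    set G : ℕ → H →L[ℂ] H := fun n => (a ∘L E n - E n ∘L a) ∘L E n with hG
    have hGnorm : ∀ n, ‖G n‖ ≤ ‖E n ∘L a - a ∘L E n‖ := by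
      intro n
      calc ‖(a ∘L E n - E n ∘L a) ∘L E n‖ ≤ ‖a ∘L E n - E n ∘L a‖ * ‖E n‖ :=
        ContinuousLinearMap.opNorm_comp_le _ _
      _ ≤ ‖a ∘L E n - E n ∘L a‖ * 1 :=
        mul_le_mul_of_nonneg_left (Enorm n) (norm_nonneg _)
      _ = ‖E n ∘L a - a ∘L E n‖ := by rw [mul_one, norm_sub_rev]
    have hGsumm : Summable G :=
      Summable.of_norm_bounded (hsummable a ha) hGnorm
    have hK := hGsumm.hasSum
    have hKx : ∀ x : H, HasSum (fun n => G n x) ((∑' n, G n) x) := by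
      intro x
      exact hK.mapL (ContinuousLinearMap.apply ℂ H x)
    have hsum2 : ∀ x : H, HasSum (fun n => G n x) ((a - δmap a) x) := by
      intro x
      have h1 : HasSum (fun n => a (E n x)) (a x) := (hsum x).mapL a
      have h2 := h1.sub (hδHas a x)
      have h3 : (fun n => a (E n x) - (E n ∘L a ∘L E n) x) = fun n => G n x := by
        funext n
        simp [hG, ContinuousLinearMap.comp_apply, ContinuousLinearMap.sub_apply, EappIdem]
      rw [h3] at h2
      exact h2
    have heq : a - δmap a = ∑' n, G n := by
      ext x
      exact (hsum2 x).unique (hKx x)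

    rw [heq]
    refine isCompactOperator_of_tendsto hK ?_
    refine Eventually.of_forall fun s => ?_
    induction s using Finset.induction_on with
    | empty => simpa using isCompactOperator_zero
    | insert n s hns ih =>
      rw [Finset.sum_insert hns]
      have hGn : IsCompactOperator ⇑(G n) := by
        refine aux_compact_of_fd ?_
        have hr : LinearMap.range (G n).toLinearMap =
            Submodule.map ((a ∘L E n - E n ∘L a) : H →L[ℂ] H).toLinearMap
              (LinearMap.range (E n).toLinearMap) := by
          rw [hG]
          exact LinearMap.range_comp _ _
        rw [hr]
        haveI := (hEproj n).2.2
        exact Module.Finite.map _ _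
      have : ⇑(G n + ∑ m ∈ s, G m) = ⇑(G n) + ⇑(∑ m ∈ s, G m) := by
        ext x; simp
      rw [this]
      exact hGn.add ih
end

section
/- Let A be a unital C*-algebra, (φ_i) a sequence of unital completely positive maps φ_i : A → M_{n(i)}(ℂ) which is asymptotically multiplicative (‖φ_i(ab) - φ_i(a)φ_i(b)‖ → 0 for all a,b ∈ A), and let τ_{n(i)} be the normalized trace on M_{n(i)}(ℂ). Then any weak-* limit point τ of the sequence of states (τ_{n(i)} ∘ φ_i) satisfies τ(ab) = τ(ba) for all a, b ∈ A. -/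
open Filter Topology
open scoped ComplexOrder

/-- The algebra `B(ℂⁿ) ≅ Mₙ(ℂ)`. -/
abbrev MatOp (n : ℕ) := EuclideanSpace ℂ (Fin n) →L[ℂ] EuclideanSpace ℂ (Fin n)

/-- Complete positivity of a linear map into `Mₙ(ℂ)`. -/
def IsCPIntoMat {A : Type*} [NonUnitalNormedRing A] [StarRing A] [Module ℂ A] {n : ℕ}
    (φ : A →ₗ[ℂ] MatOp n) : Prop :=
  ∀ (k : ℕ) (a : Fin k → A) (c : Fin k → MatOp n),
    (∑ i, ∑ j, star (c i) * φ (star (a i) * a j) * c j).IsPositive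

/-- The normalized trace on `Mₙ(ℂ)`. -/
noncomputable def normalizedTrace (n : ℕ) (T : MatOp n) : ℂ :=
  LinearMap.trace ℂ (EuclideanSpace ℂ (Fin n)) T.toLinearMap / n

set_option maxHeartbeats 800000 in
lemma norm_normalizedTrace_le (n : ℕ) (T : MatOp n) : ‖normalizedTrace n T‖ ≤ ‖T‖ := by
  rcases Nat.eq_zero_or_pos n with h | h
  · subst h
    simp only [normalizedTrace, Nat.cast_zero, div_zero, norm_zero]
    exact norm_nonneg T
  set e := EuclideanSpace.basisFun (Fin n) ℂ with he
  have hcoord : ∀ (x : EuclideanSpace ℂ (Fin n)) (i : Fin n), ‖x i‖ ≤ ‖x‖ := by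
    intro x i
    have h1 : x i = e.repr x i := rfl
    rw [h1, e.repr_apply_apply]
    calc ‖(inner ℂ (e i) x : ℂ)‖ ≤ ‖e i‖ * ‖x‖ := norm_inner_le_norm _ _
      _ = ‖x‖ := by rw [e.orthonormal.1 i, one_mul]
  have htr : LinearMap.trace ℂ (EuclideanSpace ℂ (Fin n)) T.toLinearMap
      = ∑ i : Fin n, (T (e i)) i := by
    rw [LinearMap.trace_eq_matrix_trace ℂ e.toBasis, Matrix.trace]
    simp only [Matrix.diag, LinearMap.toMatrix_apply]
    rfl
  have hb : ∀ i : Fin n, ‖(T (e i)) i‖ ≤ ‖T‖ := by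
    intro i
    calc ‖(T (e i)) i‖ ≤ ‖T (e i)‖ := hcoord _ i
      _ ≤ ‖T‖ * ‖e i‖ := T.le_opNorm _
      _ = ‖T‖ := by rw [e.orthonormal.1 i, mul_one]
  have hn : (0:ℝ) < (n:ℝ) := by exact_mod_cast h
  calc ‖normalizedTrace n T‖ = ‖∑ i : Fin n, (T (e i)) i‖ / n := by
        rw [normalizedTrace, htr, norm_div]
        norm_num
    _ ≤ (∑ i : Fin n, ‖(T (e i)) i‖) / n := by gcongr; exact norm_sum_le _ _
    _ ≤ (∑ _i : Fin n, ‖T‖) / n := by gcongr with i; exact hb i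
    _ = ‖T‖ := by
        rw [Finset.sum_const, Finset.card_univ, Fintype.card_fin, nsmul_eq_mul,
          mul_comm, mul_div_assoc, div_self hn.ne', mul_one]

lemma normalizedTrace_mul_comm (n : ℕ) (S T : MatOp n) :
    normalizedTrace n (S * T) = normalizedTrace n (T * S) := by
  unfold normalizedTrace
  congr 1
  exact LinearMap.trace_mul_comm ℂ S.toLinearMap T.toLinearMap

lemma normalizedTrace_sub (n : ℕ) (S T : MatOp n) :
    normalizedTrace n (S - T) = normalizedTrace n S - normalizedTrace n T := by
  unfold normalizedTrace
  rw [← sub_div]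
  congr 1
  rw [← map_sub]
  rfl

/-- If `(φᵢ)` is an asymptotically multiplicative sequence of unital completely positive
maps from a unital `C*`-algebra `A` into matrix algebras, then any weak-* limit point `τ`
of the states `τ_{n(i)} ∘ φᵢ` (i.e. any limit along a nontrivial filter finer than `atTop`)
is tracial: `τ(ab) = τ(ba)`. -/
theorem limit_of_matrix_traces_is_tracial {A : Type*} [CStarAlgebra A]
    (n : ℕ → ℕ) (φ : ∀ i, A →ₗ[ℂ] MatOp (n i))
    (hunital : ∀ i, φ i 1 = 1)
    (hcp : ∀ i, IsCPIntoMat (φ i))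
    (hmult : ∀ a b : A, Tendsto (fun i => ‖φ i (a * b) - φ i a * φ i b‖) atTop (𝓝 0))
    (τ : A →ₗ[ℂ] ℂ) (L : Filter ℕ) (hLne : L.NeBot) (hL : L ≤ atTop)
    (hlim : ∀ a : A, Tendsto (fun i => normalizedTrace (n i) (φ i a)) L (𝓝 (τ a))) :
    ∀ a b : A, τ (a * b) = τ (b * a) := by
  intro a b
  have key : ∀ x y : A, Tendsto (fun i => normalizedTrace (n i) (φ i x * φ i y)) L
      (𝓝 (τ (x * y))) := by
    intro x y
    have h2 : Tendsto (fun i => normalizedTrace (n i) (φ i (x * y))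
        - normalizedTrace (n i) (φ i x * φ i y)) L (𝓝 0) := by
      refine squeeze_zero_norm (fun i => ?_) ((hmult x y).mono_left hL)
      rw [← normalizedTrace_sub]
      exact norm_normalizedTrace_le _ _
    have := (hlim (x * y)).sub h2
    simpa using this
  have k1 := key a b
  have k2 : Tendsto (fun i => normalizedTrace (n i) (φ i a * φ i b)) L (𝓝 (τ (b * a))) := by
    have := key b a
    simpa only [normalizedTrace_mul_comm] using this
  exact tendsto_nhds_unique k1 k2
end

section
/- Let (A_n) be a sequence of C*-algebras. Then the direct product Π_n A_n (bounded sequences with the sup norm) is quasidiagonal if and only if each A_n is quasidiagonal. -/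
open Filter Topology

/-- `S ⊆ B(H)` is a quasidiagonal set of operators. -/
def QDSet {H : Type*} [NormedAddCommGroup H] [InnerProductSpace ℂ H]
    (S : Set (H →L[ℂ] H)) : Prop :=
  ∀ (ω : Finset (H →L[ℂ] H)), ↑ω ⊆ S → ∀ (χ : Finset H) (ε : ℝ), 0 < ε →
    ∃ P : H →L[ℂ] H, IsFinRankProj P ∧ (∀ T ∈ ω, ‖T ∘L P - P ∘L T‖ ≤ ε) ∧
      ∀ x ∈ χ, ‖P x - x‖ ≤ ε

/-- A representation of `A` on a Hilbert space. -/
structure HilbertRep (A : Type*) [NonUnitalNormedRing A] [StarRing A] [Module ℂ A] where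
  space : Type
  [nacg : NormedAddCommGroup space]
  [ipc : InnerProductSpace ℂ space]
  [cs : CompleteSpace space]
  hom : A →⋆ₙₐ[ℂ] (space →L[ℂ] space)

/-- A `C*`-algebra is quasidiagonal if it has a faithful representation whose image is a
quasidiagonal set of operators. -/
def IsQD (A : Type*) [NonUnitalNormedRing A] [StarRing A] [Module ℂ A] : Prop :=
  ∃ r : HilbertRep A,
    letI := r.nacg; letI := r.ipc; letI := r.cs
    Function.Injective r.hom ∧ QDSet (Set.range r.hom)

open scoped ENNReal


set_option linter.unusedSectionVars false
set_option linter.unusedVariables false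
set_option maxHeartbeats 1000000

section Aux
variable {G : ℕ → Type} [∀ n, NormedAddCommGroup (G n)] [∀ n, InnerProductSpace ℂ (G n)]

lemma two_toReal_pos : (0:ℝ) < (2:ℝ≥0∞).toReal := by norm_num

lemma lp_two_sum_le {C : ℝ} (hC : 0 ≤ C) (x y : lp G 2) (h : ∀ n, ‖y n‖ ≤ C * ‖x n‖) :
    ‖y‖ ≤ C * ‖x‖ := by
  have h2 := two_toReal_pos
  refine lp.norm_le_of_forall_sum_le h2 (mul_nonneg hC (lp.norm_nonneg' x)) fun s => ?_
  calc ∑ i ∈ s, ‖y i‖ ^ (2:ℝ≥0∞).toReal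
      ≤ ∑ i ∈ s, (C * ‖x i‖) ^ (2:ℝ≥0∞).toReal := by
        exact Finset.sum_le_sum fun i _ => Real.rpow_le_rpow (norm_nonneg _) (h i) h2.le
    _ = C ^ (2:ℝ≥0∞).toReal * ∑ i ∈ s, ‖x i‖ ^ (2:ℝ≥0∞).toReal := by
        simp_rw [Real.mul_rpow hC (norm_nonneg _)]
        rw [Finset.mul_sum]
    _ ≤ C ^ (2:ℝ≥0∞).toReal * ‖x‖ ^ (2:ℝ≥0∞).toReal := by
        exact mul_le_mul_of_nonneg_left (lp.sum_rpow_le_norm_rpow h2 x s)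
          (Real.rpow_nonneg hC _)
    _ = (C * ‖x‖) ^ (2:ℝ≥0∞).toReal := (Real.mul_rpow hC (lp.norm_nonneg' x)).symm

lemma memℓp_block {C : ℝ} (f : ∀ n, G n →L[ℂ] G n) (hf : ∀ n, ‖f n‖ ≤ C) (x : lp G 2) :
    Memℓp (fun n => f n (x n)) 2 := by
  have hC : 0 ≤ C := (norm_nonneg (f 0)).trans (hf 0)
  have h2 := two_toReal_pos
  apply memℓp_gen
  refine Summable.of_nonneg_of_le (fun i => Real.rpow_nonneg (norm_nonneg _) _)
    (fun i => ?_) (((lp.memℓp x).summable h2).mul_left (C ^ (2:ℝ≥0∞).toReal))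
  calc ‖f i (x i)‖ ^ (2:ℝ≥0∞).toReal
      ≤ (C * ‖x i‖) ^ (2:ℝ≥0∞).toReal := by
        refine Real.rpow_le_rpow (norm_nonneg _) ?_ h2.le
        exact ((f i).le_opNorm (x i)).trans (mul_le_mul_of_nonneg_right (hf i) (norm_nonneg _))
    _ = C ^ (2:ℝ≥0∞).toReal * ‖x i‖ ^ (2:ℝ≥0∞).toReal := Real.mul_rpow hC (norm_nonneg _)

/-- block diagonal operator -/
noncomputable def blockOp (f : ∀ n, G n →L[ℂ] G n) (C : ℝ) (hf : ∀ n, ‖f n‖ ≤ C) :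
    lp G 2 →L[ℂ] lp G 2 :=
  LinearMap.mkContinuous
    { toFun := fun x => (⟨fun n => f n (x n), memℓp_block f hf x⟩ : lp G 2)
      map_add' := fun x y => lp.ext (funext fun n => by
        simp [lp.coeFn_add, Pi.add_apply, map_add]; rfl)
      map_smul' := fun c x => lp.ext (funext fun n => by
        simp [lp.coeFn_smul, Pi.smul_apply, map_smul]) }
    C
    (fun x => lp_two_sum_le ((norm_nonneg (f 0)).trans (hf 0)) x _ (fun n =>
      ((f n).le_opNorm (x n)).trans (mul_le_mul_of_nonneg_right (hf n) (norm_nonneg _))))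

@[simp] lemma blockOp_apply (f : ∀ n, G n →L[ℂ] G n) (C : ℝ) (hf : ∀ n, ‖f n‖ ≤ C)
    (x : lp G 2) (n : ℕ) : blockOp f C hf x n = f n (x n) := rfl

lemma blockOp_norm_le (f : ∀ n, G n →L[ℂ] G n) (C : ℝ) (hf : ∀ n, ‖f n‖ ≤ C) :
    ‖blockOp f C hf‖ ≤ C :=
  LinearMap.mkContinuous_norm_le _ ((norm_nonneg (f 0)).trans (hf 0)) _

lemma blockOp_comp (f g : ∀ n, G n →L[ℂ] G n) (C D E : ℝ) (hf : ∀ n, ‖f n‖ ≤ C)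
    (hg : ∀ n, ‖g n‖ ≤ D) (hE : ∀ n, ‖f n ∘L g n‖ ≤ E) :
    blockOp f C hf ∘L blockOp g D hg = blockOp (fun n => f n ∘L g n) E hE :=
  ContinuousLinearMap.ext fun x => lp.ext rfl

lemma blockOp_sub (f g : ∀ n, G n →L[ℂ] G n) (C D E : ℝ) (hf : ∀ n, ‖f n‖ ≤ C)
    (hg : ∀ n, ‖g n‖ ≤ D) (hE : ∀ n, ‖f n - g n‖ ≤ E) :
    blockOp f C hf - blockOp g D hg = blockOp (fun n => f n - g n) E hE :=
  ContinuousLinearMap.ext fun x => lp.ext rfl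

lemma blockOp_congr (f g : ∀ n, G n →L[ℂ] G n) (C D : ℝ) (hf : ∀ n, ‖f n‖ ≤ C)
    (hg : ∀ n, ‖g n‖ ≤ D) (h : ∀ n, f n = g n) :
    blockOp f C hf = blockOp g D hg :=
  ContinuousLinearMap.ext fun x => lp.ext (funext fun n => by
    simp only [blockOp_apply, h n])

lemma blockOp_inner (f g : ∀ n, G n →L[ℂ] G n) (C D : ℝ) (hf : ∀ n, ‖f n‖ ≤ C)
    (hg : ∀ n, ‖g n‖ ≤ D) (h : ∀ n (u : G n) (v : G n), (inner ℂ (f n u) v : ℂ) = inner ℂ u (g n v))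
    (x y : lp G 2) : (inner ℂ (blockOp f C hf x) y : ℂ) = inner ℂ x (blockOp g D hg y) := by
  rw [lp.inner_eq_tsum, lp.inner_eq_tsum]
  exact tsum_congr fun n => h n (x n) (y n)

/-- `lp.single` as a linear map. -/
noncomputable def singleLM (i : ℕ) : G i →ₗ[ℂ] lp G 2 where
  toFun a := lp.single 2 i a
  map_add' a b := lp.ext (funext fun j => by
    by_cases h : j = i
    · subst h; simp [lp.single_apply_self, lp.coeFn_add]
    · simp [lp.single_apply_ne _ _ _ h, lp.coeFn_add, h])
  map_smul' c a := lp.single_smul 2 i c a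

@[simp] lemma singleLM_apply (i : ℕ) (a : G i) :
    (singleLM (G := G) i a : lp G 2) = lp.single 2 i a := rfl

end Aux

section Proj
variable {H : Type*} [NormedAddCommGroup H] [InnerProductSpace ℂ H]

lemma proj_norm_le
    {P : H →L[ℂ] H} (h1 : P ∘L P = P)
    (h2 : ∀ x y : H, (inner ℂ (P x) y : ℂ) = inner ℂ x (P y)) (x : H) : ‖P x‖ ≤ ‖x‖ := by
  have hPP : P (P x) = P x := by
    conv_rhs => rw [← h1]
    rfl
  have key : (inner ℂ (P x) (P x) : ℂ) = inner ℂ x (P x) := by rw [h2 x (P x), hPP]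
  have h3 : (‖P x‖ : ℝ) ^ 2 = ‖(inner ℂ x (P x) : ℂ)‖ := by
    rw [← key, inner_self_eq_norm_sq_to_K]
    simp [norm_pow]
  have h4 : ‖(inner ℂ x (P x) : ℂ)‖ ≤ ‖x‖ * ‖P x‖ := norm_inner_le_norm x (P x)
  rcases ((norm_nonneg (P x)).lt_or_eq.symm.imp_left Eq.symm) with h | h
  · rw [h]; exact norm_nonneg x
  · have h5 : ‖P x‖ ^ 2 ≤ ‖x‖ * ‖P x‖ := h3 ▸ h4
    exact le_of_mul_le_mul_right (by nlinarith) h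
end Proj

section Main
variable {A : ℕ → Type} [∀ n, NonUnitalCStarAlgebra (A n)]
variable {G : ℕ → Type} [∀ n, NormedAddCommGroup (G n)] [∀ n, InnerProductSpace ℂ (G n)]
  [∀ n, CompleteSpace (G n)]

lemma pi_bound (π : ∀ n, A n →⋆ₙₐ[ℂ] (G n →L[ℂ] G n)) (a : lp A ∞) (n : ℕ) :
    ‖π n (a n)‖ ≤ ‖a‖ :=
  (NonUnitalStarAlgHom.norm_apply_le (π n) (a n)).trans
    (lp.norm_apply_le_norm (by norm_num) a n)

variable (π : ∀ n, A n →⋆ₙₐ[ℂ] (G n →L[ℂ] G n))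

/-- The block-diagonal representation of the product algebra. -/
noncomputable def prodHom : lp A ∞ →⋆ₙₐ[ℂ] (lp G 2 →L[ℂ] lp G 2) where
  toFun a := blockOp (fun n => π n (a n)) ‖a‖ (pi_bound π a)
  map_smul' c a := ContinuousLinearMap.ext fun x => lp.ext (funext fun n => by
    simp [lp.coeFn_smul, Pi.smul_apply, map_smul])
  map_zero' := ContinuousLinearMap.ext fun x => lp.ext (funext fun n => by
    simp [lp.coeFn_zero, Pi.zero_apply])
  map_add' a b := ContinuousLinearMap.ext fun x => lp.ext (funext fun n => by
    simp [lp.coeFn_add, Pi.add_apply, map_add])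
  map_mul' a b := ContinuousLinearMap.ext fun x => lp.ext (funext fun n => by
    simp [lp.infty_coeFn_mul, Pi.mul_apply, map_mul, ContinuousLinearMap.mul_apply])
  map_star' a := by
    have : ∀ n (u v : G n), (inner ℂ ((π n) ((star a) n) u) v : ℂ) = inner ℂ u (π n (a n) v) := by
      intro n u v
      rw [lp.star_apply, map_star, ContinuousLinearMap.star_eq_adjoint,
        ContinuousLinearMap.adjoint_inner_left]
    rw [ContinuousLinearMap.star_eq_adjoint]
    refine (ContinuousLinearMap.eq_adjoint_iff _ _).mpr fun x y => ?_
    exact blockOp_inner (fun n => π n ((star a) n)) (fun n => π n (a n)) ‖star a‖ ‖a‖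
      (pi_bound π (star a)) (pi_bound π a) this x y

lemma prodHom_apply (a : lp A ∞) (x : lp G 2) (n : ℕ) :
    prodHom π a x n = π n (a n) (x n) := rfl

lemma prodHom_injective (hinj : ∀ n, Function.Injective (π n)) :
    Function.Injective (prodHom π) := by
  refine (injective_iff_map_eq_zero _).mpr fun a ha => ?_
  refine lp.ext (funext fun n => ?_)
  refine (injective_iff_map_eq_zero (π n)).mp (hinj n) (a n) ?_
  refine ContinuousLinearMap.ext fun v => ?_
  have := congrFun (congrArg (fun (T : lp G 2 →L[ℂ] lp G 2) => (T (lp.single 2 n v) : ∀ i, G i))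
    ha) n
  simpa [prodHom_apply, lp.single_apply_self] using this

lemma prodHom_qd (hqd : ∀ n, QDSet (Set.range (π n))) : QDSet (Set.range (prodHom π)) := by
  classical
  intro ω hω χ ε hε
  have haT : ∀ T : {T // T ∈ ω}, ∃ a : lp A ∞, prodHom π a = T := fun T => hω T.2
  choose aOf haOf using haT
  -- choose a cut-off `N`
  have hNx : ∀ x : lp G 2, ∃ Nx : ℕ, ∀ M, Nx ≤ M →
      ‖x - ∑ i ∈ Finset.range M, lp.single 2 i (x i)‖ ≤ ε / 2 := by
    intro x
    have hs : HasSum (fun i => lp.single 2 i (x i)) x :=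
      lp.hasSum_single (by norm_num) x
    rw [HasSum] at hs
    obtain ⟨s₀, hs₀⟩ := (Metric.tendsto_atTop.mp hs) (ε/2) (by positivity)
    refine ⟨s₀.sup id + 1, fun M hM => ?_⟩
    have hsub : s₀ ⊆ Finset.range M := fun i hi => Finset.mem_range.mpr
      (lt_of_lt_of_le (Nat.lt_succ_of_le (Finset.le_sup (f := id) hi)) hM)
    have h1 := hs₀ (Finset.range M) hsub
    rw [dist_eq_norm, norm_sub_rev] at h1
    exact h1.le
  choose Nf hNf using hNx
  set N : ℕ := χ.sup Nf with hN
  set δ : ℝ := ε / (2 * (N + 1)) with hδdef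
  have hδ : 0 < δ := by positivity
  have hδε : δ ≤ ε := by
    rw [hδdef]
    refine div_le_self hε.le ?_
    have : (0:ℝ) ≤ (N:ℝ) := Nat.cast_nonneg N
    nlinarith
  -- apply quasidiagonality of each factor
  have hPex : ∀ n, ∃ P : G n →L[ℂ] G n, IsFinRankProj P ∧
      (∀ T ∈ (ω.attach.image fun T => π n ((aOf T) n)), ‖T ∘L P - P ∘L T‖ ≤ δ) ∧
      ∀ v ∈ χ.image (fun x : lp G 2 => x n), ‖P v - v‖ ≤ δ := by
    intro n
    refine hqd n _ ?_ _ δ hδ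
    intro T hT
    simp only [Finset.coe_image, Set.mem_image] at hT
    obtain ⟨S, hS, rfl⟩ := hT
    exact ⟨_, rfl⟩
  choose Pn hPn using hPex
  set Q : ∀ n, G n →L[ℂ] G n := (fun n => if n < N then Pn n else 0) with hQ
  have hQ1 : ∀ n, ‖Q n‖ ≤ 1 := by
    intro n
    by_cases h : n < N
    · simp only [hQ, if_pos h]
      exact ContinuousLinearMap.opNorm_le_bound _ zero_le_one (fun v => by
        simpa using proj_norm_le (hPn n).1.1 (hPn n).1.2.1 v)
    · simp [hQ, if_neg h]
  have hQQ : ∀ n, Q n ∘L Q n = Q n := by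
    intro n
    by_cases h : n < N
    · simp only [hQ, if_pos h]
      exact (hPn n).1.1
    · simp [hQ, if_neg h]
  have hQsym : ∀ n (u v : G n), (inner ℂ (Q n u) v : ℂ) = inner ℂ u (Q n v) := by
    intro n u v
    by_cases h : n < N
    · simp only [hQ, if_pos h]
      exact (hPn n).1.2.1 u v
    · simp [hQ, if_neg h]
  refine ⟨blockOp Q 1 hQ1, ⟨?_, ?_, ?_⟩, ?_, ?_⟩
  · -- idempotent
    rw [blockOp_comp Q Q 1 1 1 hQ1 hQ1 (fun n => by rw [hQQ n]; exact hQ1 n)]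
    exact blockOp_congr _ _ _ _ _ _ hQQ
  · -- self-adjoint
    exact fun x y => blockOp_inner Q Q 1 1 hQ1 hQ1 hQsym x y
  · -- finite rank
    haveI hfd : ∀ i, FiniteDimensional ℂ (LinearMap.range (Q i).toLinearMap) := by
      intro i
      by_cases h : i < N
      · have hQn : Q i = Pn i := by rw [hQ]; exact if_pos h
        rw [hQn]
        exact (hPn i).1.2.2
      · have hQn : Q i = 0 := by rw [hQ]; exact if_neg h
        rw [hQn, ContinuousLinearMap.coe_zero, LinearMap.range_zero]
        infer_instance
    set S : Submodule ℂ (lp G 2) :=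
      (Finset.range N).sup (fun i => (LinearMap.range (Q i).toLinearMap).map (singleLM i))
      with hS
    haveI : FiniteDimensional ℂ S := Submodule.finiteDimensional_finset_sup _ _
    refine Submodule.finiteDimensional_of_le (S₂ := S) ?_
    rintro y ⟨x, rfl⟩
    have hyx : blockOp Q 1 hQ1 x = ∑ i ∈ Finset.range N, singleLM i (Q i (x i)) := by
      refine lp.ext (funext fun n => ?_)
      simp only [blockOp_apply, singleLM_apply, lp.coeFn_sum, Finset.sum_apply,
        lp.single_apply, Finset.sum_dite_eq, Finset.mem_range]
      by_cases h : n < N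
      · simp [h]
      · simp [h, hQ, if_neg h]
    show (blockOp Q 1 hQ1) x ∈ S
    rw [hyx]
    refine Submodule.sum_mem S (fun i hi => ?_)
    exact Finset.le_sup (f := fun i => (LinearMap.range (Q i).toLinearMap).map (singleLM i)) hi
      (Submodule.mem_map_of_mem (LinearMap.mem_range_self _ (x i)))
  · -- commutators
    intro T hT
    set a : lp A ∞ := aOf ⟨T, hT⟩ with hadef
    have ha : prodHom π a = T := haOf ⟨T, hT⟩
    have hc : ∀ n, ‖π n (a n) ∘L Q n - Q n ∘L π n (a n)‖ ≤ ε := by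
      intro n
      by_cases h : n < N
      · refine le_trans ?_ hδε
        have hmem : π n (a n) ∈ ω.attach.image fun T => π n ((aOf T) n) :=
          Finset.mem_image.mpr ⟨⟨T, hT⟩, Finset.mem_attach _ _, rfl⟩
        have hQn : Q n = Pn n := by rw [hQ]; exact if_pos h
        rw [hQn]
        exact (hPn n).2.1 _ hmem
      · have hQn : Q n = 0 := by rw [hQ]; exact if_neg h
        rw [hQn]
        simp [hε.le]
    have heq : T ∘L blockOp Q 1 hQ1 - blockOp Q 1 hQ1 ∘L T
        = blockOp (fun n => π n (a n) ∘L Q n - Q n ∘L π n (a n)) ε hc := by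
      rw [← ha]
      exact ContinuousLinearMap.ext fun x => lp.ext rfl
    rw [heq]
    exact blockOp_norm_le _ _ hc
  · -- vectors
    intro x hx
    have hz : ‖x - ∑ i ∈ Finset.range N, lp.single 2 i (x i)‖ ≤ ε / 2 :=
      hNf x N (Finset.le_sup (f := Nf) hx)
    set z : lp G 2 := x - ∑ i ∈ Finset.range N, lp.single 2 i (x i) with hzdef
    have hzc : ∀ n, ¬ n < N → (z : ∀ j, G j) n = x n := by
      intro n hn
      simp [hzdef, lp.coeFn_sub, Pi.sub_apply, lp.coeFn_sum, Finset.sum_apply,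
        lp.single_apply, Finset.sum_dite_eq, Finset.mem_range, hn]
      refine (Finset.sum_apply n _ _).trans ?_
      exact Finset.sum_eq_zero fun i hi => (lp.single_apply 2 i (x i) n).trans
        (Pi.single_eq_of_ne (by rintro rfl; exact hn (Finset.mem_range.mp hi)) _)
    have ht : (2:ℝ≥0∞).toReal = (2:ℝ) := by norm_num
    have hpow : ∀ r : ℝ, r ^ (2:ℝ≥0∞).toReal = r ^ 2 := fun r => by
      rw [ht]; exact Real.rpow_two r
    refine lp.norm_le_of_forall_sum_le two_toReal_pos hε.le (fun s => ?_)
    have hcoord : ∀ n, ((blockOp Q 1 hQ1 x - x : lp G 2) : ∀ j, G j) n = Q n (x n) - x n :=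
      fun n => rfl
    rw [← Finset.sum_filter_add_sum_filter_not s (· < N)]
    have part1 : ∑ i ∈ s.filter (· < N), ‖(blockOp Q 1 hQ1 x - x : lp G 2) i‖ ^ (2:ℝ≥0∞).toReal
        ≤ (N:ℝ) * δ ^ 2 := by
      have hterm : ∀ i ∈ s.filter (· < N),
          ‖(blockOp Q 1 hQ1 x - x : lp G 2) i‖ ^ (2:ℝ≥0∞).toReal ≤ δ ^ 2 := by
        intro i hi
        have hiN : i < N := (Finset.mem_filter.mp hi).2
        have hmem : x i ∈ χ.image (fun x : lp G 2 => x i) := Finset.mem_image_of_mem _ hx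
        have hb : ‖Q i (x i) - x i‖ ≤ δ := by
          simpa [hQ, if_pos hiN] using (hPn i).2.2 _ hmem
        rw [hcoord i, hpow]
        exact pow_le_pow_left₀ (norm_nonneg _) hb 2 |>.trans (le_refl _)
      calc ∑ i ∈ s.filter (· < N), ‖(blockOp Q 1 hQ1 x - x : lp G 2) i‖ ^ (2:ℝ≥0∞).toReal
          ≤ ∑ _i ∈ s.filter (· < N), δ ^ 2 := Finset.sum_le_sum hterm
        _ = (s.filter (· < N)).card * δ ^ 2 := by rw [Finset.sum_const, nsmul_eq_mul]
        _ ≤ (N:ℝ) * δ ^ 2 := by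
            refine mul_le_mul_of_nonneg_right ?_ (sq_nonneg δ)
            have : (s.filter (· < N)).card ≤ N := by
              refine le_trans (Finset.card_le_card (fun i hi => Finset.mem_range.mpr
                (Finset.mem_filter.mp hi).2)) ?_
              simp
            exact_mod_cast this
    have part2 : ∑ i ∈ s.filter (¬ · < N),
        ‖(blockOp Q 1 hQ1 x - x : lp G 2) i‖ ^ (2:ℝ≥0∞).toReal ≤ (ε/2) ^ 2 := by
      have hterm : ∀ i ∈ s.filter (¬ · < N),
          ‖(blockOp Q 1 hQ1 x - x : lp G 2) i‖ ^ (2:ℝ≥0∞).toReal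
            = ‖(z : ∀ j, G j) i‖ ^ (2:ℝ≥0∞).toReal := by
        intro i hi
        have hiN : ¬ i < N := (Finset.mem_filter.mp hi).2
        rw [hcoord i, hzc i hiN]
        simp [hQ, if_neg hiN]
      rw [Finset.sum_congr rfl hterm]
      calc ∑ i ∈ s.filter (¬ · < N), ‖(z : ∀ j, G j) i‖ ^ (2:ℝ≥0∞).toReal
          ≤ ‖z‖ ^ (2:ℝ≥0∞).toReal := lp.sum_rpow_le_norm_rpow two_toReal_pos z _
        _ ≤ (ε/2) ^ 2 := by
            rw [hpow]
            exact pow_le_pow_left₀ (lp.norm_nonneg' z) hz 2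
    have hNδ : (N:ℝ) * δ ^ 2 ≤ ε^2 / 4 := by
      have hN0 : (0:ℝ) ≤ (N:ℝ) := Nat.cast_nonneg N
      have h1 : (N:ℝ) * δ ^ 2 ≤ ((N:ℝ) + 1) * δ ^ 2 := by nlinarith [sq_nonneg δ]
      have h2 : ((N:ℝ) + 1) * δ ^ 2 = ε^2 / (4 * ((N:ℝ) + 1)) := by
        rw [hδdef]
        field_simp
        ring
      have h3 : ε^2 / (4 * ((N:ℝ) + 1)) ≤ ε^2 / 4 := by
        apply div_le_div_of_nonneg_left (sq_nonneg ε) (by norm_num) (by nlinarith)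
      linarith
    have : ε ^ (2:ℝ≥0∞).toReal = ε^2 := hpow ε
    rw [this]
    have : (ε/2)^2 = ε^2/4 := by ring
    linarith [part1, part2, sq_nonneg ε]

end Main

section Fwd
variable {A : ℕ → Type} [∀ n, NonUnitalCStarAlgebra (A n)]

/-- inclusion of a factor into the product -/
noncomputable def inclHom (n : ℕ) : A n →⋆ₙₐ[ℂ] lp A ∞ where
  toFun a := lp.single ∞ n a
  map_smul' c a := lp.single_smul ∞ n c a
  map_zero' := lp.ext (funext fun j => by
    by_cases h : j = n
    · subst h; simp [lp.single_apply_self]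
    · simp [lp.single_apply_ne _ _ _ h])
  map_add' a b := lp.ext (funext fun j => by
    by_cases h : j = n
    · subst h; simp [lp.single_apply_self, lp.coeFn_add]
    · simp [lp.single_apply_ne _ _ _ h, lp.coeFn_add, h])
  map_mul' a b := lp.ext (funext fun j => by
    rw [lp.infty_coeFn_mul]
    by_cases h : j = n
    · subst h; simp [lp.single_apply_self]
    · simp [lp.single_apply_ne _ _ _ h, Pi.single_eq_of_ne h])
  map_star' a := lp.ext (funext fun j => by
    rw [lp.coeFn_star]
    by_cases h : j = n
    · subst h; simp [lp.single_apply_self]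
    · simp [lp.single_apply_ne _ _ _ h, Pi.single_eq_of_ne h])

lemma inclHom_injective (n : ℕ) : Function.Injective (inclHom (A := A) n) := by
  intro a b hab
  have := congrFun (congrArg (fun (x : lp A ∞) => (x : ∀ i, A i)) hab) n
  simpa [inclHom, lp.single_apply_self] using this

end Fwd

/-- The direct product `Π_n A_n` (bounded sequences with sup norm, realized as
`lp A ∞`) of a sequence of `C*`-algebras is quasidiagonal iff each `A n` is. -/

theorem isQD_pi_iff (A : ℕ → Type) [∀ n, NonUnitalCStarAlgebra (A n)] :
    IsQD (lp A ∞) ↔ ∀ n, IsQD (A n) := by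
  constructor
  · intro h n
    obtain ⟨r, hr⟩ := h
    letI := r.nacg; letI := r.ipc; letI := r.cs
    obtain ⟨hinj, hqd⟩ := hr
    refine ⟨⟨r.space, r.hom.comp (inclHom n)⟩, ?_, ?_⟩
    · exact hinj.comp (inclHom_injective n)
    · intro ω hω χ ε hε
      refine hqd ω (hω.trans ?_) χ ε hε
      rintro T ⟨a, rfl⟩
      exact ⟨inclHom n a, rfl⟩
  · intro h
    choose r hr using h
    letI : ∀ n, NormedAddCommGroup ((r n).space) := fun n => (r n).nacg
    letI : ∀ n, InnerProductSpace ℂ ((r n).space) := fun n => (r n).ipc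
    letI : ∀ n, CompleteSpace ((r n).space) := fun n => (r n).cs
    exact ⟨⟨lp (fun n => (r n).space) 2, prodHom (fun n => (r n).hom)⟩,
      prodHom_injective _ (fun n => (hr n).1), prodHom_qd _ (fun n => (hr n).2)⟩
end

section
/- If A and B are quasidiagonal C*-algebras, then the minimal (spatial) tensor product A ⊗_min B is quasidiagonal. -/
open Filter Topology

open scoped InnerProductSpace

set_option maxHeartbeats 1000000

section QDAux

open scoped InnerProductSpace

variable {H : Type*} [NormedAddCommGroup H] [InnerProductSpace ℂ H]

lemma IsFinRankProj.norm_le_one {P : H →L[ℂ] H} (hP : IsFinRankProj P) : ‖P‖ ≤ 1 := by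
  obtain ⟨hidem, hsym, -⟩ := hP
  refine P.opNorm_le_bound zero_le_one fun x => ?_
  rw [one_mul]
  by_cases h : ‖P x‖ = 0
  · rw [h]; exact norm_nonneg x
  have h1 : ‖P x‖ ^ 2 = RCLike.re (inner ℂ (P x) (P x) : ℂ) := by
    rw [inner_self_eq_norm_sq]
  have h2 : (inner ℂ (P x) (P x) : ℂ) = inner ℂ x (P x) := by
    rw [hsym x (P x), ← ContinuousLinearMap.comp_apply, hidem]
  have h3 : ‖P x‖ ^ 2 ≤ ‖x‖ * ‖P x‖ := by
    rw [h1, h2]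
    calc RCLike.re (inner ℂ x (P x) : ℂ) ≤ ‖(inner ℂ x (P x) : ℂ)‖ := RCLike.re_le_norm _
      _ ≤ ‖x‖ * ‖P x‖ := norm_inner_le_norm _ _
  have hpos : 0 < ‖P x‖ := lt_of_le_of_ne (norm_nonneg _) (Ne.symm h)
  nlinarith

lemma QDSet.mono {S S' : Set (H →L[ℂ] H)} (h : S' ⊆ S) (hS : QDSet S) : QDSet S' :=
  fun ω hω => hS ω (hω.trans h)

lemma QDSet.closure' {S : Set (H →L[ℂ] H)} (hS : QDSet S) : QDSet (_root_.closure S) := by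
  intro ω hω χ ε hε
  have hch : ∀ T : {x // x ∈ ω}, ∃ T', T' ∈ S ∧ ‖(T : H →L[ℂ] H) - T'‖ ≤ ε / 3 := by
    rintro ⟨T, hT⟩
    have : T ∈ _root_.closure S := hω hT
    obtain ⟨T', hT', hd⟩ := Metric.mem_closure_iff.mp this (ε / 3) (by linarith)
    exact ⟨T', hT', by rw [← dist_eq_norm]; exact hd.le⟩
  choose f hfS hfd using hch
  classical
  obtain ⟨P, hP, hcomm, hvec⟩ := hS (Finset.univ.image f) (by
    intro x hx
    simp only [Finset.coe_image, Set.mem_image] at hx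
    obtain ⟨T, -, rfl⟩ := hx
    exact hfS T) χ (ε / 3) (by linarith)
  refine ⟨P, hP, fun T hT => ?_, fun x hx => le_trans (hvec x hx) (by linarith)⟩
  obtain ⟨T', hTd, hTc⟩ : ∃ T', ‖T - T'‖ ≤ ε / 3 ∧ ‖T' ∘L P - P ∘L T'‖ ≤ ε / 3 :=
    ⟨f ⟨T, hT⟩, hfd ⟨T, hT⟩, hcomm (f ⟨T, hT⟩) (Finset.mem_image_of_mem f (Finset.mem_univ _))⟩
  have hPn : ‖P‖ ≤ 1 := hP.norm_le_one
  have key : T ∘L P - P ∘L T =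
      (T - T') ∘L P + (T' ∘L P - P ∘L T') + P ∘L (T' - T) := by
    simp [ContinuousLinearMap.sub_comp, ContinuousLinearMap.comp_sub]
  rw [key]
  have h1 : ‖(T - T') ∘L P‖ ≤ ε / 3 := by
    calc ‖(T - T') ∘L P‖ ≤ ‖T - T'‖ * ‖P‖ := ContinuousLinearMap.opNorm_comp_le _ _
      _ ≤ (ε / 3) * 1 := mul_le_mul hTd hPn (norm_nonneg _) (by linarith)
      _ = ε / 3 := mul_one _
  have h3 : ‖P ∘L (T' - T)‖ ≤ ε / 3 := by
    calc ‖P ∘L (T' - T)‖ ≤ ‖P‖ * ‖T' - T‖ := ContinuousLinearMap.opNorm_comp_le _ _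
      _ ≤ 1 * (ε / 3) := mul_le_mul hPn (by rw [norm_sub_rev]; exact hTd) (norm_nonneg _) zero_le_one
      _ = ε / 3 := one_mul _
  have := norm_add₃_le (a := (T - T') ∘L P) (b := T' ∘L P - P ∘L T') (c := P ∘L (T' - T))
  linarith

lemma QDSet.span {S : Set (H →L[ℂ] H)} (hS : QDSet S) :
    QDSet ((Submodule.span ℂ S : Submodule ℂ (H →L[ℂ] H)) : Set (H →L[ℂ] H)) := by
  classical
  intro ω hω χ ε hε
  have hch : ∀ T : {x // x ∈ ω}, ∃ n, ∃ c : Fin n → ℂ, ∃ w : Fin n → S,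
      ∑ i, c i • (w i : H →L[ℂ] H) = T := fun T => Submodule.mem_span_set'.mp (hω T.2)
  choose n c w hsum using hch
  set C : ℝ := 1 + ∑ T : {x // x ∈ ω}, ∑ i, ‖c T i‖ with hC
  have hsums : (0:ℝ) ≤ ∑ T : {x // x ∈ ω}, ∑ i, ‖c T i‖ :=
    Finset.sum_nonneg fun T _ => Finset.sum_nonneg fun i _ => norm_nonneg _
  have hCpos : 0 < C := by rw [hC]; linarith
  set δ := min ε (ε / C) with hδ
  have hδpos : 0 < δ := lt_min hε (div_pos hε hCpos)
  set ω' : Finset (H →L[ℂ] H) :=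
    Finset.univ.biUnion (fun T : {x // x ∈ ω} =>
      Finset.image (fun i => (w T i : H →L[ℂ] H)) Finset.univ) with hω'
  have hω'S : ↑ω' ⊆ S := by
    intro x hx
    rw [hω'] at hx
    simp only [Finset.coe_biUnion, Set.mem_iUnion, Finset.coe_image, Set.mem_image,
      Finset.mem_coe, Finset.mem_univ, Set.mem_range] at hx
    obtain ⟨T, -, i, -, rfl⟩ := hx
    exact (w T i).2
  obtain ⟨P, hP, hcomm, hvec⟩ := hS ω' hω'S χ δ hδpos
  refine ⟨P, hP, fun T hT => ?_, fun x hx => (hvec x hx).trans (min_le_left _ _)⟩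
  obtain ⟨m, cc, ww, hwmem, hcsum, hTsum⟩ :
      ∃ (m : ℕ) (cc : Fin m → ℂ) (ww : Fin m → (H →L[ℂ] H)),
        (∀ i, ww i ∈ ω') ∧ (∑ i, ‖cc i‖) ≤ C ∧ ∑ i, cc i • ww i = T := by
    refine ⟨n ⟨T, hT⟩, c ⟨T, hT⟩, fun i => (w ⟨T, hT⟩ i : H →L[ℂ] H), fun i => ?_, ?_, hsum ⟨T, hT⟩⟩
    · rw [hω']
      exact Finset.mem_biUnion.mpr ⟨⟨T, hT⟩, Finset.mem_univ _,
        Finset.mem_image_of_mem _ (Finset.mem_univ i)⟩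
    · rw [hC]
      have := Finset.single_le_sum (f := fun T : {x // x ∈ ω} => ∑ i, ‖c T i‖)
        (fun T _ => Finset.sum_nonneg fun i _ => norm_nonneg _) (Finset.mem_univ ⟨T, hT⟩)
      linarith
  have key : T ∘L P - P ∘L T = ∑ i, cc i • (ww i ∘L P - P ∘L ww i) := by
    have h1 : T ∘L P - P ∘L T = T * P - P * T := rfl
    rw [h1, ← hTsum, Finset.sum_mul, Finset.mul_sum, ← Finset.sum_sub_distrib]
    refine Finset.sum_congr rfl fun i _ => ?_
    rw [smul_mul_assoc, mul_smul_comm, ← smul_sub]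
    rfl
  rw [key]
  calc ‖∑ i, cc i • (ww i ∘L P - P ∘L ww i)‖
      ≤ ∑ i, ‖cc i • (ww i ∘L P - P ∘L ww i)‖ := norm_sum_le _ _
    _ ≤ ∑ i, ‖cc i‖ * δ := by
        refine Finset.sum_le_sum fun i _ => ?_
        exact (norm_smul_le _ _).trans
          (mul_le_mul_of_nonneg_left (hcomm _ (hwmem i)) (norm_nonneg _))
    _ = (∑ i, ‖cc i‖) * δ := (Finset.sum_mul _ _ _).symm
    _ ≤ C * (ε / C) := mul_le_mul hcsum (min_le_right _ _) hδpos.le hCpos.le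
    _ = ε := by field_simp

section Tensor

variable {H K HK : Type*}
  [NormedAddCommGroup H] [InnerProductSpace ℂ H] [CompleteSpace H]
  [NormedAddCommGroup K] [InnerProductSpace ℂ K] [CompleteSpace K]
  [NormedAddCommGroup HK] [InnerProductSpace ℂ HK] [CompleteSpace HK]

open scoped InnerProductSpace

lemma tensor_ext (t : H →ₗ[ℂ] K →ₗ[ℂ] HK)
    (hdense : Dense (Submodule.span ℂ (Set.range fun p : H × K => t p.1 p.2) : Set HK))
    {f g : HK →L[ℂ] HK} (h : ∀ x y, f (t x y) = g (t x y)) : f = g := by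
  refine ContinuousLinearMap.ext_on hdense ?_
  rintro _ ⟨⟨x, y⟩, rfl⟩
  exact h x y

lemma tensor_norm (t : H →ₗ[ℂ] K →ₗ[ℂ] HK)
    (ht : ∀ (x x' : H) (y y' : K),
      (inner ℂ (t x y) (t x' y') : ℂ) = (inner ℂ x x' : ℂ) * (inner ℂ y y' : ℂ))
    (x : H) (y : K) : ‖t x y‖ = ‖x‖ * ‖y‖ := by
  have h1 : (inner ℂ (t x y) (t x y) : ℂ) = (inner ℂ x x : ℂ) * (inner ℂ y y : ℂ) := ht x x y y
  rw [inner_self_eq_norm_sq_to_K, inner_self_eq_norm_sq_to_K, inner_self_eq_norm_sq_to_K] at h1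
  have h3 : (‖t x y‖ : ℝ) ^ 2 = ‖x‖ ^ 2 * ‖y‖ ^ 2 := by exact_mod_cast h1
  calc ‖t x y‖ = Real.sqrt (‖t x y‖ ^ 2) := (Real.sqrt_sq (norm_nonneg _)).symm
    _ = Real.sqrt ((‖x‖ * ‖y‖) ^ 2) := by rw [h3, mul_pow]
    _ = ‖x‖ * ‖y‖ := Real.sqrt_sq (mul_nonneg (norm_nonneg x) (norm_nonneg y))

lemma tensor_repr (t : H →ₗ[ℂ] K →ₗ[ℂ] HK) {z : HK}
    (hz : z ∈ Submodule.span ℂ (Set.range fun p : H × K => t p.1 p.2)) :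
    ∃ (n : ℕ) (x : Fin n → H) (y : Fin n → K), z = ∑ i, t (x i) (y i) := by
  obtain ⟨n, cf, g, hg⟩ := Submodule.mem_span_set'.mp hz
  have hch : ∀ i : Fin n, ∃ (x : H) (y : K), (g i : HK) = t x y := by
    intro i
    obtain ⟨⟨x, y⟩, hxy⟩ := (g i).2
    exact ⟨x, y, hxy.symm⟩
  choose x y hxy using hch
  refine ⟨n, fun i => cf i • x i, y, ?_⟩
  rw [← hg]
  refine Finset.sum_congr rfl fun i _ => ?_
  rw [hxy i, map_smul, LinearMap.smul_apply]

lemma tensor_repr_on (t : H →ₗ[ℂ] K →ₗ[ℂ] HK) {z : HK}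
    (hz : z ∈ Submodule.span ℂ (Set.range fun p : H × K => t p.1 p.2)) :
    ∃ (m : ℕ) (e : Fin m → H) (w : Fin m → K),
      Orthonormal ℂ e ∧ z = ∑ j, t (e j) (w j) := by
  obtain ⟨n, x, y, rfl⟩ := tensor_repr t hz
  set V : Submodule ℂ H := Submodule.span ℂ (Set.range x) with hV
  haveI : FiniteDimensional ℂ V := FiniteDimensional.span_of_finite ℂ (Set.finite_range x)
  set b := stdOrthonormalBasis ℂ V with hb
  set m := Module.finrank ℂ V with hm
  refine ⟨m, fun j => ((b j : V) : H), fun j => ∑ i, (inner ℂ ((b j : V) : H) (x i) : ℂ) • y i,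
    ?_, ?_⟩
  · have hon := b.orthonormal
    rw [orthonormal_iff_ite] at hon ⊢
    intro i j
    rw [← Submodule.coe_inner]
    exact hon i j
  · have hx : ∀ i, x i = ∑ j, (inner ℂ ((b j : V) : H) (x i) : ℂ) • ((b j : V) : H) := by
      intro i
      have hxi : x i ∈ V := Submodule.subset_span (Set.mem_range_self i)
      have h0 : ((∑ j, (inner ℂ (b j) (⟨x i, hxi⟩ : V) : ℂ) • b j : V) : H) = x i := by
        rw [b.sum_repr']
      conv_lhs => rw [← h0]
      simp [Submodule.coe_inner]
    calc ∑ i, t (x i) (y i)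
        = ∑ i, ∑ j, (inner ℂ ((b j : V) : H) (x i) : ℂ) • t ((b j : V) : H) (y i) := by
          refine Finset.sum_congr rfl fun i _ => ?_
          conv_lhs => rw [hx i]
          rw [map_sum, LinearMap.sum_apply]
          refine Finset.sum_congr rfl fun j _ => ?_
          rw [map_smul, LinearMap.smul_apply]
      _ = ∑ j, t ((b j : V) : H) (∑ i, (inner ℂ ((b j : V) : H) (x i) : ℂ) • y i) := by
          rw [Finset.sum_comm]
          refine Finset.sum_congr rfl fun j _ => ?_
          rw [map_sum]
          refine Finset.sum_congr rfl fun i _ => ?_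
          rw [map_smul]

lemma tensor_orthonormal_norm (t : H →ₗ[ℂ] K →ₗ[ℂ] HK)
    (ht : ∀ (x x' : H) (y y' : K),
      (inner ℂ (t x y) (t x' y') : ℂ) = (inner ℂ x x' : ℂ) * (inner ℂ y y' : ℂ))
    {m : ℕ} {e : Fin m → H} (he : Orthonormal ℂ e) (w : Fin m → K) :
    ‖∑ j, t (e j) (w j)‖ ^ 2 = ∑ j, ‖w j‖ ^ 2 := by
  have h1 : (inner ℂ (∑ j, t (e j) (w j)) (∑ j, t (e j) (w j)) : ℂ)
      = ∑ j, (‖w j‖ : ℂ) ^ 2 := by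
    rw [inner_sum]
    refine Finset.sum_congr rfl fun j _ => ?_
    rw [sum_inner]
    rw [orthonormal_iff_ite] at he
    have : ∀ i ∈ Finset.univ, (inner ℂ (t (e i) (w i)) (t (e j) (w j)) : ℂ)
        = if i = j then (inner ℂ (w i) (w j) : ℂ) else 0 := by
      intro i _
      rw [ht, he i j]
      split <;> simp
    rw [Finset.sum_congr rfl this, Finset.sum_ite_eq' Finset.univ j
      (fun i => (inner ℂ (w i) (w j) : ℂ))]
    simp [inner_self_eq_norm_sq_to_K]
  rw [inner_self_eq_norm_sq_to_K] at h1
  have h2 : ((‖∑ j, t (e j) (w j)‖ : ℝ) : ℂ) ^ 2 = ∑ j, ((‖w j‖ : ℝ) : ℂ) ^ 2 := h1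
  exact_mod_cast h2

variable (t : H →ₗ[ℂ] K →ₗ[ℂ] HK)
  (ht : ∀ (x x' : H) (y y' : K),
    (inner ℂ (t x y) (t x' y') : ℂ) = (inner ℂ x x' : ℂ) * (inner ℂ y y' : ℂ))
  (hdense : Dense (Submodule.span ℂ (Set.range fun p : H × K => t p.1 p.2) : Set HK))
  (τ : (H →L[ℂ] H) → (K →L[ℂ] K) → (HK →L[ℂ] HK))
  (hτ : ∀ (S : H →L[ℂ] H) (T : K →L[ℂ] K) (x : H) (y : K), τ S T (t x y) = t (S x) (T y))

include t ht hdense hτ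

lemma tau_one_right_norm (T : K →L[ℂ] K) : ‖τ 1 T‖ ≤ ‖T‖ := by
  refine ContinuousLinearMap.opNorm_le_bound _ (norm_nonneg T) fun z => ?_
  have hset : ∀ z ∈ Submodule.span ℂ (Set.range fun p : H × K => t p.1 p.2),
      ‖τ 1 T z‖ ≤ ‖T‖ * ‖z‖ := by
    intro z hz
    obtain ⟨m, e, w, he, rfl⟩ := tensor_repr_on t hz
    have h1 : τ 1 T (∑ j, t (e j) (w j)) = ∑ j, t (e j) (T (w j)) := by
      rw [map_sum]
      exact Finset.sum_congr rfl fun j _ => by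
        rw [hτ, ContinuousLinearMap.one_apply]
    rw [h1]
    have h2 := tensor_orthonormal_norm t ht he (fun j => T (w j))
    have h3 := tensor_orthonormal_norm t ht he w
    have h4 : ‖∑ j, t (e j) (T (w j))‖ ^ 2 ≤ (‖T‖ * ‖∑ j, t (e j) (w j)‖) ^ 2 := by
      rw [h2, mul_pow, h3, Finset.mul_sum]
      refine Finset.sum_le_sum fun j _ => ?_
      have h5 := T.le_opNorm (w j)
      nlinarith [norm_nonneg (T (w j)), norm_nonneg (w j), norm_nonneg T]
    nlinarith [norm_nonneg (∑ j, t (e j) (T (w j))),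
      mul_nonneg (norm_nonneg T) (norm_nonneg (∑ j, t (e j) (w j)))]
  have hcl : IsClosed {z : HK | ‖τ 1 T z‖ ≤ ‖T‖ * ‖z‖} :=
    isClosed_le ((τ 1 T).continuous.norm) (continuous_const.mul continuous_norm)
  exact closure_minimal hset hcl (hdense z)

lemma tau_one_left_norm (S : H →L[ℂ] H) : ‖τ S 1‖ ≤ ‖S‖ := by
  have hrange : (Set.range fun p : K × H => t.flip p.1 p.2)
      = (Set.range fun p : H × K => t p.1 p.2) := by
    ext z
    constructor
    · rintro ⟨⟨y, x⟩, rfl⟩; exact ⟨(x, y), rfl⟩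
    · rintro ⟨⟨x, y⟩, rfl⟩; exact ⟨(y, x), rfl⟩
  exact tau_one_right_norm t.flip
    (fun y y' x x' => by rw [LinearMap.flip_apply, LinearMap.flip_apply, ht, mul_comm])
    (by rw [hrange]; exact hdense)
    (fun T S => τ S T)
    (fun T S y x => hτ S T x y) S

lemma tau_comp (S S' : H →L[ℂ] H) (T T' : K →L[ℂ] K) :
    τ S T ∘L τ S' T' = τ (S ∘L S') (T ∘L T') :=
  tensor_ext t hdense fun x y => by
    simp only [ContinuousLinearMap.comp_apply, hτ]

lemma tau_sub_left (S S' : H →L[ℂ] H) (T : K →L[ℂ] K) :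
    τ (S - S') T = τ S T - τ S' T :=
  tensor_ext t hdense fun x y => by
    simp only [ContinuousLinearMap.sub_apply, hτ, ContinuousLinearMap.coe_sub', Pi.sub_apply,
      map_sub, LinearMap.sub_apply]

lemma tau_sub_right (S : H →L[ℂ] H) (T T' : K →L[ℂ] K) :
    τ S (T - T') = τ S T - τ S T' :=
  tensor_ext t hdense fun x y => by
    simp only [ContinuousLinearMap.sub_apply, hτ, ContinuousLinearMap.coe_sub', Pi.sub_apply,
      map_sub, LinearMap.sub_apply]

lemma tau_norm (S : H →L[ℂ] H) (T : K →L[ℂ] K) : ‖τ S T‖ ≤ ‖S‖ * ‖T‖ := by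
  have hfac : τ S T = τ S 1 ∘L τ 1 T := by
    rw [tau_comp t ht hdense τ hτ]
    congr 1 <;> simp
  rw [hfac]
  calc ‖τ S 1 ∘L τ 1 T‖ ≤ ‖τ S 1‖ * ‖τ 1 T‖ := ContinuousLinearMap.opNorm_comp_le _ _
    _ ≤ ‖S‖ * ‖T‖ := mul_le_mul (tau_one_left_norm t ht hdense τ hτ S)
        (tau_one_right_norm t ht hdense τ hτ T) (norm_nonneg _) (norm_nonneg _)

lemma tau_inner (S S' : H →L[ℂ] H) (T T' : K →L[ℂ] K)
    (hS : ∀ x x' : H, (inner ℂ (S' x) x' : ℂ) = inner ℂ x (S x'))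
    (hT : ∀ y y' : K, (inner ℂ (T' y) y' : ℂ) = inner ℂ y (T y')) :
    ∀ u v : HK, (inner ℂ (τ S' T' u) v : ℂ) = inner ℂ u (τ S T v) := by
  have step1 : ∀ (x : H) (y : K) (v : HK),
      (inner ℂ (τ S' T' (t x y)) v : ℂ) = inner ℂ (t x y) (τ S T v) := by
    intro x y
    suffices h : innerSL ℂ (τ S' T' (t x y)) = (innerSL ℂ (t x y)).comp (τ S T) by
      intro v
      have := DFunLike.congr_fun h v
      simpa using this
    refine ContinuousLinearMap.ext_on hdense ?_
    rintro _ ⟨⟨x', y'⟩, rfl⟩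
    simp only [innerSL_apply_apply, ContinuousLinearMap.comp_apply]
    rw [hτ, hτ, ht, ht, hS, hT]
  intro u v
  have step2 : (innerSL ℂ v).comp (τ S' T') = innerSL ℂ (τ S T v) := by
    refine ContinuousLinearMap.ext_on hdense ?_
    rintro _ ⟨⟨x, y⟩, rfl⟩
    simp only [innerSL_apply_apply, ContinuousLinearMap.comp_apply]
    calc (inner ℂ v (τ S' T' (t x y)) : ℂ)
        = starRingEnd ℂ (inner ℂ (τ S' T' (t x y)) v : ℂ) := (inner_conj_symm _ _).symm
      _ = starRingEnd ℂ (inner ℂ (t x y) (τ S T v) : ℂ) := by rw [step1]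
      _ = inner ℂ (τ S T v) (t x y) := inner_conj_symm _ _
  have h2 := DFunLike.congr_fun step2 u
  simp only [innerSL_apply_apply, ContinuousLinearMap.comp_apply] at h2
  calc (inner ℂ (τ S' T' u) v : ℂ)
      = starRingEnd ℂ (inner ℂ v (τ S' T' u) : ℂ) := (inner_conj_symm _ _).symm
    _ = starRingEnd ℂ (inner ℂ (τ S T v) u : ℂ) := by rw [h2]
    _ = inner ℂ u (τ S T v) := inner_conj_symm _ _

lemma tau_star (S : H →L[ℂ] H) (T : K →L[ℂ] K) :
    star (τ S T) = τ (star S) (star T) := by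
  rw [ContinuousLinearMap.star_eq_adjoint]
  symm
  rw [ContinuousLinearMap.eq_adjoint_iff]
  exact tau_inner t ht hdense τ hτ S (star S) T (star T)
    (fun x x' => by
      rw [ContinuousLinearMap.star_eq_adjoint]
      exact ContinuousLinearMap.adjoint_inner_left _ _ _)
    (fun y y' => by
      rw [ContinuousLinearMap.star_eq_adjoint]
      exact ContinuousLinearMap.adjoint_inner_left _ _ _)

lemma isFinRankProj_tau {P : H →L[ℂ] H} {Q : K →L[ℂ] K}
    (hP : IsFinRankProj P) (hQ : IsFinRankProj Q) : IsFinRankProj (τ P Q) := by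
  obtain ⟨hP1, hP2, hP3⟩ := hP
  obtain ⟨hQ1, hQ2, hQ3⟩ := hQ
  refine ⟨?_, ?_, ?_⟩
  · rw [tau_comp t ht hdense τ hτ, hP1, hQ1]
  · exact fun u v => tau_inner t ht hdense τ hτ P P Q Q hP2 hQ2 u v
  · haveI := hP3
    haveI := hQ3
    obtain ⟨sP, hsPfin, hsP⟩ := Submodule.fg_def.mp
      ((Submodule.fg_iff_finiteDimensional _).mpr hP3)
    obtain ⟨sQ, hsQfin, hsQ⟩ := Submodule.fg_def.mp
      ((Submodule.fg_iff_finiteDimensional _).mpr hQ3)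
    set V : Submodule ℂ HK :=
      Submodule.map₂ t (LinearMap.range P.toLinearMap) (LinearMap.range Q.toLinearMap) with hV
    haveI hVfin : FiniteDimensional ℂ V := by
      rw [hV, ← hsP, ← hsQ, Submodule.map₂_span_span]
      exact FiniteDimensional.span_of_finite ℂ (Set.Finite.image2 _ hsPfin hsQfin)
    have hrange : ∀ u : HK, τ P Q u ∈ V := by
      have hgen : (Submodule.span ℂ (Set.range fun p : H × K => t p.1 p.2) : Set HK)
          ⊆ (τ P Q) ⁻¹' (V : Set HK) := by
        have hle : Submodule.span ℂ (Set.range fun p : H × K => t p.1 p.2)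
            ≤ Submodule.comap (τ P Q).toLinearMap V := by
          rw [Submodule.span_le]
          rintro _ ⟨⟨x, y⟩, rfl⟩
          simp only [Submodule.mem_comap, ContinuousLinearMap.coe_coe, Set.mem_preimage,
            SetLike.mem_coe]
          rw [hτ]
          exact Submodule.apply_mem_map₂ t (LinearMap.mem_range_self _ x)
            (LinearMap.mem_range_self _ y)
        exact hle
      have hcl : IsClosed ((τ P Q) ⁻¹' (V : Set HK)) :=
        (Submodule.closed_of_finiteDimensional V).preimage (τ P Q).continuous
      intro u
      exact closure_minimal hgen hcl (hdense u)
    have hle : LinearMap.range (τ P Q).toLinearMap ≤ V := by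
      rintro _ ⟨u, rfl⟩
      exact hrange u
    exact Submodule.finiteDimensional_of_le hle

lemma qdSet_tau {S₁ : Set (H →L[ℂ] H)} {S₂ : Set (K →L[ℂ] K)}
    (h₁ : QDSet S₁) (h₂ : QDSet S₂) :
    QDSet {W : HK →L[ℂ] HK | ∃ S ∈ S₁, ∃ T ∈ S₂, W = τ S T} := by
  classical
  intro ω hω χ ε hε
  have hch : ∀ W : {x // x ∈ ω}, ∃ S, S ∈ S₁ ∧ ∃ T, T ∈ S₂ ∧ (W : HK →L[ℂ] HK) = τ S T := by
    rintro ⟨W, hW⟩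
    obtain ⟨S, hS, T, hT, hWST⟩ := hω hW
    exact ⟨S, hS, T, hT, hWST⟩
  choose Sf hSf Tf hTf hWf using hch
  have hchv : ∀ u : {x // x ∈ χ}, ∃ n, ∃ xs : Fin n → H, ∃ ys : Fin n → K,
      ‖(u : HK) - ∑ i, t (xs i) (ys i)‖ ≤ ε / 4 := by
    rintro u
    obtain ⟨z, hzmem, hzd⟩ := Metric.mem_closure_iff.mp (hdense (u : HK)) (ε / 4) (by linarith)
    obtain ⟨n, xs, ys, rfl⟩ := tensor_repr t hzmem
    exact ⟨n, xs, ys, by rw [← dist_eq_norm]; exact hzd.le⟩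
  choose nv xs ys happ using hchv
  set Cop : ℝ := 1 + ∑ W : {x // x ∈ ω}, (‖Sf W‖ + ‖Tf W‖) with hCop
  set Cvec : ℝ := 1 + ∑ u : {x // x ∈ χ}, ∑ i, (‖xs u i‖ + ‖ys u i‖) with hCvec
  have hCop0 : (0:ℝ) ≤ ∑ W : {x // x ∈ ω}, (‖Sf W‖ + ‖Tf W‖) :=
    Finset.sum_nonneg fun W _ => add_nonneg (norm_nonneg _) (norm_nonneg _)
  have hCvec0 : (0:ℝ) ≤ ∑ u : {x // x ∈ χ}, ∑ i, (‖xs u i‖ + ‖ys u i‖) :=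
    Finset.sum_nonneg fun u _ => Finset.sum_nonneg fun i _ =>
      add_nonneg (norm_nonneg _) (norm_nonneg _)
  have hCopPos : 0 < Cop := by rw [hCop]; linarith
  have hCvecPos : 0 < Cvec := by rw [hCvec]; linarith
  set δ : ℝ := min (ε / Cop) (ε / (2 * Cvec)) with hδ
  have hδpos : 0 < δ := lt_min (div_pos hε hCopPos) (div_pos hε (by linarith))
  obtain ⟨P, hP, hPcomm, hPvec⟩ := h₁ (Finset.univ.image Sf)
    (by intro x hx
        simp only [Finset.coe_image, Set.mem_image] at hx
        obtain ⟨W, -, rfl⟩ := hx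
        exact hSf W)
    (Finset.univ.biUnion fun u : {x // x ∈ χ} => Finset.univ.image (xs u)) δ hδpos
  obtain ⟨Q, hQ, hQcomm, hQvec⟩ := h₂ (Finset.univ.image Tf)
    (by intro x hx
        simp only [Finset.coe_image, Set.mem_image] at hx
        obtain ⟨W, -, rfl⟩ := hx
        exact hTf W)
    (Finset.univ.biUnion fun u : {x // x ∈ χ} => Finset.univ.image (ys u)) δ hδpos
  have hPn : ‖P‖ ≤ 1 := hP.norm_le_one
  have hQn : ‖Q‖ ≤ 1 := hQ.norm_le_one
  refine ⟨τ P Q, isFinRankProj_tau t ht hdense τ hτ hP hQ, ?_, ?_⟩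
  · -- commutators
    intro W hW
    obtain ⟨S, T, hWST, hScomm, hTcomm, hSTn⟩ :
        ∃ (S : H →L[ℂ] H) (T : K →L[ℂ] K), W = τ S T ∧ ‖S ∘L P - P ∘L S‖ ≤ δ ∧
          ‖T ∘L Q - Q ∘L T‖ ≤ δ ∧ ‖S‖ + ‖T‖ ≤ Cop := by
      refine ⟨Sf ⟨W, hW⟩, Tf ⟨W, hW⟩, hWf ⟨W, hW⟩, ?_, ?_, ?_⟩
      · exact hPcomm _ (Finset.mem_image_of_mem Sf (Finset.mem_univ _))
      · exact hQcomm _ (Finset.mem_image_of_mem Tf (Finset.mem_univ _))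
      · rw [hCop]
        have h7 : ‖Sf ⟨W, hW⟩‖ + ‖Tf ⟨W, hW⟩‖ ≤ ∑ W : {x // x ∈ ω}, (‖Sf W‖ + ‖Tf W‖) :=
          Finset.single_le_sum (f := fun W : {x // x ∈ ω} => ‖Sf W‖ + ‖Tf W‖)
            (fun W _ => add_nonneg (norm_nonneg _) (norm_nonneg _)) (Finset.mem_univ (⟨W, hW⟩ : {x // x ∈ ω}))
        linarith
    rw [hWST]
    have key : τ S T ∘L τ P Q - τ P Q ∘L τ S T =
        τ (S ∘L P - P ∘L S) (T ∘L Q) + τ (P ∘L S) (T ∘L Q - Q ∘L T) := by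
      rw [tau_comp t ht hdense τ hτ, tau_comp t ht hdense τ hτ,
        tau_sub_left t ht hdense τ hτ, tau_sub_right t ht hdense τ hτ]
      abel
    rw [key]
    have b1 : ‖τ (S ∘L P - P ∘L S) (T ∘L Q)‖ ≤ δ * ‖T‖ := by
      calc ‖τ (S ∘L P - P ∘L S) (T ∘L Q)‖ ≤ ‖S ∘L P - P ∘L S‖ * ‖T ∘L Q‖ :=
            tau_norm t ht hdense τ hτ _ _
        _ ≤ δ * ‖T‖ := by
            refine mul_le_mul hScomm ?_ (norm_nonneg _) hδpos.le
            calc ‖T ∘L Q‖ ≤ ‖T‖ * ‖Q‖ := ContinuousLinearMap.opNorm_comp_le _ _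
              _ ≤ ‖T‖ * 1 := mul_le_mul_of_nonneg_left hQn (norm_nonneg _)
              _ = ‖T‖ := mul_one _
    have b2 : ‖τ (P ∘L S) (T ∘L Q - Q ∘L T)‖ ≤ ‖S‖ * δ := by
      calc ‖τ (P ∘L S) (T ∘L Q - Q ∘L T)‖ ≤ ‖P ∘L S‖ * ‖T ∘L Q - Q ∘L T‖ :=
            tau_norm t ht hdense τ hτ _ _
        _ ≤ ‖S‖ * δ := by
            refine mul_le_mul ?_ hTcomm (norm_nonneg _) (norm_nonneg _)
            calc ‖P ∘L S‖ ≤ ‖P‖ * ‖S‖ := ContinuousLinearMap.opNorm_comp_le _ _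
              _ ≤ 1 * ‖S‖ := mul_le_mul_of_nonneg_right hPn (norm_nonneg _)
              _ = ‖S‖ := one_mul _
    have hfin : δ * ‖T‖ + ‖S‖ * δ ≤ ε := by
      have h5 : δ * ‖T‖ + ‖S‖ * δ = δ * (‖S‖ + ‖T‖) := by ring
      rw [h5]
      calc δ * (‖S‖ + ‖T‖) ≤ (ε / Cop) * Cop := by
            refine mul_le_mul (min_le_left _ _) hSTn ?_ ?_
            · positivity
            · positivity
        _ = ε := div_mul_cancel₀ ε hCopPos.ne'
    calc ‖τ (S ∘L P - P ∘L S) (T ∘L Q) + τ (P ∘L S) (T ∘L Q - Q ∘L T)‖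
        ≤ ‖τ (S ∘L P - P ∘L S) (T ∘L Q)‖ + ‖τ (P ∘L S) (T ∘L Q - Q ∘L T)‖ := norm_add_le _ _
      _ ≤ δ * ‖T‖ + ‖S‖ * δ := add_le_add b1 b2
      _ ≤ ε := hfin
  · -- vectors
    intro u hu
    obtain ⟨n, x0, y0, happ0, hx0, hy0, hsum0⟩ :
        ∃ (n : ℕ) (x0 : Fin n → H) (y0 : Fin n → K),
          ‖u - ∑ i, t (x0 i) (y0 i)‖ ≤ ε / 4 ∧ (∀ i, ‖P (x0 i) - x0 i‖ ≤ δ) ∧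
            (∀ i, ‖Q (y0 i) - y0 i‖ ≤ δ) ∧ ∑ i, (‖x0 i‖ + ‖y0 i‖) ≤ Cvec := by
      refine ⟨nv ⟨u, hu⟩, xs ⟨u, hu⟩, ys ⟨u, hu⟩, happ ⟨u, hu⟩, ?_, ?_, ?_⟩
      · intro i
        refine hPvec _ (Finset.mem_biUnion.mpr ⟨⟨u, hu⟩, Finset.mem_univ _,
          Finset.mem_image_of_mem _ (Finset.mem_univ i)⟩)
      · intro i
        refine hQvec _ (Finset.mem_biUnion.mpr ⟨⟨u, hu⟩, Finset.mem_univ _,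
          Finset.mem_image_of_mem _ (Finset.mem_univ i)⟩)
      · rw [hCvec]
        have h7 : ∑ i, (‖xs ⟨u, hu⟩ i‖ + ‖ys ⟨u, hu⟩ i‖)
            ≤ ∑ u : {x // x ∈ χ}, ∑ i, (‖xs u i‖ + ‖ys u i‖) :=
          Finset.single_le_sum
            (f := fun u : {x // x ∈ χ} => ∑ i, (‖xs u i‖ + ‖ys u i‖))
            (fun u _ => Finset.sum_nonneg fun i _ => add_nonneg (norm_nonneg _) (norm_nonneg _))
            (Finset.mem_univ (⟨u, hu⟩ : {x // x ∈ χ}))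
        linarith
    set z : HK := ∑ i, t (x0 i) (y0 i) with hz
    have key2 : τ P Q u - u = τ P Q (u - z) + (τ P Q z - z) + (z - u) := by
      rw [map_sub]; abel
    rw [key2]
    have hτPQn : ‖τ P Q‖ ≤ 1 := by
      calc ‖τ P Q‖ ≤ ‖P‖ * ‖Q‖ := tau_norm t ht hdense τ hτ _ _
        _ ≤ 1 := mul_le_one₀ hPn (norm_nonneg _) hQn
    have b1 : ‖τ P Q (u - z)‖ ≤ ε / 4 := by
      calc ‖τ P Q (u - z)‖ ≤ ‖τ P Q‖ * ‖u - z‖ := (τ P Q).le_opNorm _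
        _ ≤ 1 * (ε / 4) := mul_le_mul hτPQn happ0 (norm_nonneg _) zero_le_one
        _ = ε / 4 := one_mul _
    have b2 : ‖τ P Q z - z‖ ≤ ε / 2 := by
      have hexp : τ P Q z - z =
          ∑ i, (t (P (x0 i) - x0 i) (Q (y0 i)) + t (x0 i) (Q (y0 i) - y0 i)) := by
        rw [hz, map_sum, ← Finset.sum_sub_distrib]
        refine Finset.sum_congr rfl fun i _ => ?_
        rw [hτ, map_sub, LinearMap.sub_apply, map_sub]
        abel
      rw [hexp]
      calc ‖∑ i, (t (P (x0 i) - x0 i) (Q (y0 i)) + t (x0 i) (Q (y0 i) - y0 i))‖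
          ≤ ∑ i, ‖t (P (x0 i) - x0 i) (Q (y0 i)) + t (x0 i) (Q (y0 i) - y0 i)‖ :=
            norm_sum_le _ _
        _ ≤ ∑ i, δ * (‖x0 i‖ + ‖y0 i‖) := by
            refine Finset.sum_le_sum fun i _ => ?_
            have e1 : ‖t (P (x0 i) - x0 i) (Q (y0 i))‖ ≤ δ * ‖y0 i‖ := by
              rw [tensor_norm t ht]
              refine mul_le_mul (hx0 i) ?_ (norm_nonneg _) hδpos.le
              calc ‖Q (y0 i)‖ ≤ ‖Q‖ * ‖y0 i‖ := Q.le_opNorm _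
                _ ≤ 1 * ‖y0 i‖ := mul_le_mul_of_nonneg_right hQn (norm_nonneg _)
                _ = ‖y0 i‖ := one_mul _
            have e2 : ‖t (x0 i) (Q (y0 i) - y0 i)‖ ≤ ‖x0 i‖ * δ := by
              rw [tensor_norm t ht]
              exact mul_le_mul_of_nonneg_left (hy0 i) (norm_nonneg _)
            calc ‖t (P (x0 i) - x0 i) (Q (y0 i)) + t (x0 i) (Q (y0 i) - y0 i)‖
                ≤ ‖t (P (x0 i) - x0 i) (Q (y0 i))‖ + ‖t (x0 i) (Q (y0 i) - y0 i)‖ :=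
                  norm_add_le _ _
              _ ≤ δ * ‖y0 i‖ + ‖x0 i‖ * δ := add_le_add e1 e2
              _ = δ * (‖x0 i‖ + ‖y0 i‖) := by ring
        _ = δ * ∑ i, (‖x0 i‖ + ‖y0 i‖) := (Finset.mul_sum _ _ _).symm
        _ ≤ (ε / (2 * Cvec)) * Cvec := by
            refine mul_le_mul (min_le_right _ _) hsum0 ?_ ?_
            · exact Finset.sum_nonneg fun i _ => add_nonneg (norm_nonneg _) (norm_nonneg _)
            · positivity
        _ = ε / 2 := by field_simp
    have b3 : ‖z - u‖ ≤ ε / 4 := by rw [norm_sub_rev]; exact happ0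
    have := norm_add₃_le (a := τ P Q (u - z)) (b := τ P Q z - z) (c := z - u)
    linarith

end Tensor

end QDAux

/-- If `A` and `B` are quasidiagonal `C*`-algebras, witnessed by faithful representations
`π`, `ρ` with quasidiagonal images, then the minimal tensor product — the `C*`-algebra
generated in `B(H ⊗ K)` by the operators `π(a) ⊗ ρ(b)` — is a quasidiagonal set of
operators (hence `A ⊗_min B` is quasidiagonal).  Here the Hilbert space tensor product
`HK = H ⊗ K` is given by data: a bilinear map `t` with `⟪t x y, t x' y'⟫ = ⟪x,x'⟫⟪y,y'⟫`
and dense span, and `τ S T` is the operator with `(τ S T)(t x y) = t (S x) (T y)`. -/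
theorem qdSet_minimal_tensor_product {A B : Type*}
    [NonUnitalCStarAlgebra A] [NonUnitalCStarAlgebra B]
    {H K HK : Type*}
    [NormedAddCommGroup H] [InnerProductSpace ℂ H] [CompleteSpace H]
    [NormedAddCommGroup K] [InnerProductSpace ℂ K] [CompleteSpace K]
    [NormedAddCommGroup HK] [InnerProductSpace ℂ HK] [CompleteSpace HK]
    (t : H →ₗ[ℂ] K →ₗ[ℂ] HK)
    (ht : ∀ (x x' : H) (y y' : K),
      (inner ℂ (t x y) (t x' y') : ℂ) = (inner ℂ x x' : ℂ) * (inner ℂ y y' : ℂ))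
    (hdense : Dense (Submodule.span ℂ (Set.range fun p : H × K => t p.1 p.2) : Set HK))
    (τ : (H →L[ℂ] H) → (K →L[ℂ] K) → (HK →L[ℂ] HK))
    (hτ : ∀ (S : H →L[ℂ] H) (T : K →L[ℂ] K) (x : H) (y : K), τ S T (t x y) = t (S x) (T y))
    (π : A →⋆ₙₐ[ℂ] (H →L[ℂ] H)) (ρ : B →⋆ₙₐ[ℂ] (K →L[ℂ] K))
    (hπ : Function.Injective π) (hρ : Function.Injective ρ)
    (hπQD : QDSet (Set.range π)) (hρQD : QDSet (Set.range ρ)) :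
    QDSet (closure
      ((NonUnitalStarAlgebra.adjoin ℂ
        {W : HK →L[ℂ] HK | ∃ (a : A) (b : B), W = τ (π a) (ρ b)} : 
          NonUnitalStarSubalgebra ℂ (HK →L[ℂ] HK)) : Set (HK →L[ℂ] HK))) := by
  classical
  set M : Set (HK →L[ℂ] HK) := {W | ∃ (a : A) (b : B), W = τ (π a) (ρ b)} with hM
  have hM1 : QDSet M := by
    refine QDSet.mono ?_ (qdSet_tau t ht hdense τ hτ hπQD hρQD)
    rintro W ⟨a, b, rfl⟩
    exact ⟨π a, ⟨a, rfl⟩, ρ b, ⟨b, rfl⟩, rfl⟩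
  have hM2 : QDSet ((Submodule.span ℂ M : Submodule ℂ (HK →L[ℂ] HK)) : Set (HK →L[ℂ] HK)) :=
    hM1.span
  have hM3 := hM2.closure'
  refine QDSet.mono (closure_mono ?_) hM3
  -- adjoin M ⊆ span M
  have hgen : ∀ x ∈ M, ∀ y ∈ M, x * y ∈ Submodule.span ℂ M := by
    rintro _ ⟨a1, b1, rfl⟩ _ ⟨a2, b2, rfl⟩
    refine Submodule.subset_span ⟨a1 * a2, b1 * b2, ?_⟩
    rw [map_mul, map_mul, ContinuousLinearMap.mul_def, tau_comp t ht hdense τ hτ]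
    rfl
  have hmul0 : ∀ y ∈ Submodule.span ℂ M, ∀ x ∈ M, x * y ∈ Submodule.span ℂ M := by
    intro y hy
    induction hy using Submodule.span_induction with
    | mem b hb => intro x hx; exact hgen x hx b hb
    | zero => intro x hx; simp
    | add u v hu hv ihu ihv =>
        intro x hx
        rw [mul_add]
        exact add_mem (ihu x hx) (ihv x hx)
    | smul c u hu ihu =>
        intro x hx
        rw [mul_smul_comm]
        exact Submodule.smul_mem _ _ (ihu x hx)
  have hmul : ∀ x y : HK →L[ℂ] HK, x ∈ Submodule.span ℂ M → y ∈ Submodule.span ℂ M →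
      x * y ∈ Submodule.span ℂ M := by
    intro x y hx hy
    induction hx using Submodule.span_induction with
    | mem a ha => exact hmul0 y hy a ha
    | zero => simp
    | add u v hu hv ihu ihv =>
        rw [add_mul]
        exact add_mem ihu ihv
    | smul c u hu ihu =>
        rw [smul_mul_assoc]
        exact Submodule.smul_mem _ _ ihu
  have hstar : ∀ x ∈ Submodule.span ℂ M, star x ∈ Submodule.span ℂ M := by
    intro x hx
    induction hx using Submodule.span_induction with
    | mem a ha =>
        obtain ⟨a1, b1, rfl⟩ := ha
        refine Submodule.subset_span ⟨star a1, star b1, ?_⟩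
        rw [tau_star t ht hdense τ hτ, map_star, map_star]
    | zero => simp
    | add u v hu hv ihu ihv =>
        rw [star_add]
        exact add_mem ihu ihv
    | smul c u hu ihu =>
        rw [star_smul]
        exact Submodule.smul_mem _ _ ihu
  set SA : NonUnitalStarSubalgebra ℂ (HK →L[ℂ] HK) :=
    { toNonUnitalSubalgebra := (Submodule.span ℂ M).toNonUnitalSubalgebra hmul
      star_mem' := fun {a} ha => hstar a ha } with hSA
  have hADJ : NonUnitalStarAlgebra.adjoin ℂ M ≤ SA :=
    NonUnitalStarAlgebra.adjoin_le fun x hx => Submodule.subset_span hx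
  exact fun x hx => hADJ hx
end

section
/- Let E be a C*-algebra, I ⊂ E a closed two-sided ideal admitting an approximate unit of projections (p_n) which is quasicentral in E (‖[p_n, x]‖ → 0 for all x ∈ E), and let π : E → E/I be the quotient map. Then for every x ∈ E, ‖x‖ = max( liminf_n ‖p_n x p_n‖, ‖π(x)‖ ). -/
open Filter Topology

/-- Scalar lemma: if `a^(2^k) ≤ 2 * b^(2^k)` for all `k`, then `a ≤ b`. -/
lemma aux_le_of_pow_le {a b : ℝ} (ha : 0 ≤ a) (hb : 0 ≤ b)
    (h : ∀ k : ℕ, a ^ (2 ^ k) ≤ 2 * b ^ (2 ^ k)) : a ≤ b := by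
  by_contra hab
  push_neg at hab
  rcases eq_or_lt_of_le hb with h0 | h0
  · have h1 := h 0
    simp [← h0] at h1
    nlinarith
  · have h1 : 1 < a / b := (one_lt_div h0).2 hab
    obtain ⟨n, hn⟩ := pow_unbounded_of_one_lt (2 : ℝ) h1
    have h2 : (a / b) ^ n ≤ (a / b) ^ (2 ^ n) :=
      pow_le_pow_right₀ h1.le (Nat.lt_two_pow_self (n := n)).le
    have h3 : 2 * b ^ (2 ^ n) < (a / b) ^ (2 ^ n) * b ^ (2 ^ n) := by
      have hbpos : 0 < b ^ (2 ^ n) := pow_pos h0 _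
      nlinarith [lt_of_lt_of_le hn h2]
    rw [div_pow, div_mul_cancel₀] at h3
    · exact absurd (h n) (not_le.2 h3)
    · exact ne_of_gt (pow_pos h0 _)

lemma aux_norm_pow_two_pow {E : Type*} [NormedRing E] [StarRing E] [CStarRing E] {z : E}
    (hz : IsSelfAdjoint z) (k : ℕ) : ‖z ^ 2 ^ k‖ = ‖z‖ ^ 2 ^ k := by
  have h := hz.nnnorm_pow_two_pow k
  calc ‖z ^ 2 ^ k‖ = ((‖z ^ 2 ^ k‖₊ : ℝ)) := (coe_nnnorm _).symm
    _ = ((‖z‖₊ ^ 2 ^ k : NNReal) : ℝ) := by rw [h]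
    _ = ‖z‖ ^ 2 ^ k := by push_cast; rfl

/-- Orthogonal elements: norm of sum bounded by max. -/
lemma aux_norm_add_le_max {E : Type*} [NormedRing E] [StarRing E] [CStarRing E] {a b : E}
    (h1 : a * star b = 0) (h2 : star a * b = 0) :
    ‖a + b‖ ≤ max ‖a‖ ‖b‖ := by
  set c := star a * a with hc
  set d := star b * b with hd
  have hcd : c * d = 0 := by
    rw [hc, hd, mul_assoc, ← mul_assoc a, h1]; simp
  have hba : b * star a = 0 := by
    have := congrArg star h1; simpa [star_mul] using this
  have hsba : star b * a = 0 := by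
    have := congrArg star h2; simpa [star_mul] using this
  have hdc : d * c = 0 := by
    rw [hd, hc, mul_assoc, ← mul_assoc b, hba]; simp
  have hcsa : IsSelfAdjoint c := by simp [hc, IsSelfAdjoint, star_mul, mul_assoc]
  have hdsa : IsSelfAdjoint d := by simp [hd, IsSelfAdjoint, star_mul, mul_assoc]
  have hsum_sa : IsSelfAdjoint (c + d) := hcsa.add hdsa
  have hpow : ∀ n : ℕ, (c + d) ^ (n + 1) = c ^ (n + 1) + d ^ (n + 1) := by
    intro n
    induction n with
    | zero => simp
    | succ k ih =>
      rw [pow_succ, ih, add_mul, mul_add, mul_add]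
      have h5 : c ^ (k + 1) * d = 0 := by rw [pow_succ, mul_assoc, hcd, mul_zero]
      have h6 : d ^ (k + 1) * c = 0 := by rw [pow_succ, mul_assoc, hdc, mul_zero]
      rw [h5, h6, ← pow_succ, ← pow_succ]
      abel
  have hpow2 : ∀ k : ℕ, (c + d) ^ (2 ^ k) = c ^ (2 ^ k) + d ^ (2 ^ k) := by
    intro k
    obtain ⟨m, hm⟩ : ∃ m, 2 ^ k = m + 1 :=
      ⟨2 ^ k - 1, (Nat.succ_pred_eq_of_pos (Nat.pos_of_ne_zero (by positivity))).symm⟩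
    rw [hm]; exact hpow m
  have hkey : ‖c + d‖ ≤ max ‖c‖ ‖d‖ := by
    apply aux_le_of_pow_le (norm_nonneg _) (le_max_iff.2 (Or.inl (norm_nonneg _)))
    intro k
    calc ‖c + d‖ ^ 2 ^ k = ‖(c + d) ^ 2 ^ k‖ := (aux_norm_pow_two_pow hsum_sa k).symm
      _ = ‖c ^ 2 ^ k + d ^ 2 ^ k‖ := by rw [hpow2]
      _ ≤ ‖c ^ 2 ^ k‖ + ‖d ^ 2 ^ k‖ := norm_add_le _ _
      _ = ‖c‖ ^ 2 ^ k + ‖d‖ ^ 2 ^ k := by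
          rw [aux_norm_pow_two_pow hcsa, aux_norm_pow_two_pow hdsa]
      _ ≤ 2 * max ‖c‖ ‖d‖ ^ 2 ^ k := by
          have e1 := pow_le_pow_left₀ (norm_nonneg c) (le_max_left ‖c‖ ‖d‖) (2 ^ k)
          have e2 := pow_le_pow_left₀ (norm_nonneg d) (le_max_right ‖c‖ ‖d‖) (2 ^ k)
          linarith
  have hexp : star (a + b) * (a + b) = c + d := by
    rw [star_add, add_mul, mul_add, mul_add, h2, hsba]
    simp [hc, hd]
  have hsq : ‖a + b‖ * ‖a + b‖ ≤ max (‖a‖ * ‖a‖) (‖b‖ * ‖b‖) := by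
    rw [← CStarRing.norm_star_mul_self, hexp]
    rw [← CStarRing.norm_star_mul_self (x := a), ← CStarRing.norm_star_mul_self (x := b)]
    exact hkey
  rcases le_total ‖a‖ ‖b‖ with hab | hab
  · rw [max_eq_right hab]
    rw [max_eq_right (by nlinarith [norm_nonneg a, norm_nonneg b] : ‖a‖ * ‖a‖ ≤ ‖b‖ * ‖b‖)] at hsq
    nlinarith [norm_nonneg (a + b), norm_nonneg b]
  · rw [max_eq_left hab]
    rw [max_eq_left (by nlinarith [norm_nonneg a, norm_nonneg b] : ‖b‖ * ‖b‖ ≤ ‖a‖ * ‖a‖)] at hsq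
    nlinarith [norm_nonneg (a + b), norm_nonneg a]

/-- If a closed two-sided ideal `I` of a `C*`-algebra `E` has an approximate unit of
projections `(pₙ)` which is quasicentral in `E`, then for every `x ∈ E`,
`‖x‖ = max (liminf ‖pₙ x pₙ‖) ‖π(x)‖`, where `‖π(x)‖ = dist(x, I)` is the quotient norm
in `E/I`. -/
theorem norm_eq_max_liminf_quotient {E : Type*} [CStarAlgebra E]
    (I : Ideal E) (hIclosed : IsClosed (I : Set E))
    (hItwoSided : ∀ x ∈ I, ∀ y : E, x * y ∈ I)
    (p : ℕ → E) (hpI : ∀ n, p n ∈ I)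
    (hproj : ∀ n, p n * p n = p n ∧ star (p n) = p n)
    (hmono : ∀ n, p n * p (n + 1) = p n)
    (happrox : ∀ a ∈ I, Tendsto (fun n => ‖p n * a - a‖) atTop (𝓝 0))
    (hqc : ∀ x : E, Tendsto (fun n => ‖p n * x - x * p n‖) atTop (𝓝 0)) :
    ∀ x : E, ‖x‖ = max (Filter.liminf (fun n => ‖p n * x * p n‖) atTop)
      (Metric.infDist x (I : Set E)) := by
  intro x
  set d := Metric.infDist x (I : Set E) with hdd
  have hInonempty : ((I : Set E)).Nonempty := ⟨0, I.zero_mem⟩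
  -- norms of projections
  have hpnorm : ∀ n, ‖p n‖ ≤ 1 := by
    intro n
    have h1 : ‖p n‖ * ‖p n‖ = ‖p n‖ := by
      rw [← CStarRing.norm_star_mul_self (x := p n), (hproj n).2, (hproj n).1]
    nlinarith [norm_nonneg (p n)]
  have hqsa : ∀ n, star ((1 : E) - p n) = 1 - p n := by
    intro n; rw [star_sub, star_one, (hproj n).2]
  have hq2 : ∀ n, ((1 : E) - p n) * (1 - p n) = 1 - p n := by
    intro n
    rw [mul_sub, mul_one, sub_mul, one_mul, (hproj n).1]
    abel
  have hqnorm : ∀ n, ‖(1 : E) - p n‖ ≤ 1 := by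
    intro n
    have h1 : ‖(1 : E) - p n‖ * ‖(1 : E) - p n‖ = ‖(1 : E) - p n‖ := by
      rw [← CStarRing.norm_star_mul_self (x := (1 : E) - p n), hqsa n, hq2 n]
    nlinarith [norm_nonneg ((1 : E) - p n)]
  have hpq : ∀ n, p n * (1 - p n) = 0 := by
    intro n; rw [mul_sub, mul_one, (hproj n).1, sub_self]
  have hqp : ∀ n, (1 - p n) * p n = 0 := by
    intro n; rw [sub_mul, one_mul, (hproj n).1, sub_self]
  -- ‖p n * x * p n‖ ≤ ‖x‖
  have ha_le : ∀ n, ‖p n * x * p n‖ ≤ ‖x‖ := by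
    intro n
    calc ‖p n * x * p n‖ ≤ ‖p n * x‖ * ‖p n‖ := norm_mul_le _ _
      _ ≤ ‖p n‖ * ‖x‖ * ‖p n‖ := by
          have h0 := norm_mul_le (p n) x
          have h1 := norm_nonneg (p n)
          nlinarith
      _ ≤ ‖x‖ := by
          have h2 : ‖p n‖ * ‖p n‖ ≤ 1 :=
            mul_le_one₀ (hpnorm n) (norm_nonneg _) (hpnorm n)
          nlinarith [norm_nonneg x, norm_nonneg (p n)]
  -- d ≤ ‖(1-pₙ) x (1-pₙ)‖
  have hd_le : ∀ n, d ≤ ‖(1 - p n) * x * (1 - p n)‖ := by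
    intro n
    have hmem : p n * x + x * p n - p n * x * p n ∈ I := by
      refine I.sub_mem (I.add_mem (hItwoSided _ (hpI n) x) (I.mul_mem_left x (hpI n))) ?_
      exact hItwoSided _ (hItwoSided _ (hpI n) x) (p n)
    have hid : (1 - p n) * x * (1 - p n)
        = x - (p n * x + x * p n - p n * x * p n) := by noncomm_ring
    calc d ≤ dist x (p n * x + x * p n - p n * x * p n) :=
          Metric.infDist_le_dist_of_mem hmem
      _ = ‖(1 - p n) * x * (1 - p n)‖ := by rw [dist_eq_norm, hid]
  -- upper bound for the corner term
  have hb_upper : ∀ ε > (0:ℝ), ∀ᶠ n in atTop, ‖(1 - p n) * x * (1 - p n)‖ < d + ε := by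
    intro ε hε
    obtain ⟨y, hyI, hy⟩ : ∃ y ∈ (I : Set E), dist x y < d + ε / 2 :=
      (Metric.infDist_lt_iff hInonempty).1 (by linarith)
    filter_upwards [(happrox y hyI).eventually (gt_mem_nhds (by linarith : (0:ℝ) < ε / 2))]
      with n hn
    have e1 : ‖(1 - p n) * x * (1 - p n)‖ ≤ ‖(1 - p n) * x‖ := by
      calc ‖(1 - p n) * x * (1 - p n)‖ ≤ ‖(1 - p n) * x‖ * ‖1 - p n‖ := norm_mul_le _ _
        _ ≤ ‖(1 - p n) * x‖ := by
            nlinarith [hqnorm n, norm_nonneg ((1 - p n) * x), norm_nonneg ((1:E) - p n)]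
    have e2 : ‖(1 - p n) * x‖ ≤ ‖x - y‖ + ‖p n * y - y‖ := by
      have hsplit : (1 - p n) * x = (1 - p n) * (x - y) - (p n * y - y) := by
        noncomm_ring
      calc ‖(1 - p n) * x‖ = ‖(1 - p n) * (x - y) - (p n * y - y)‖ := by rw [hsplit]
        _ ≤ ‖(1 - p n) * (x - y)‖ + ‖p n * y - y‖ := norm_sub_le _ _
        _ ≤ ‖x - y‖ + ‖p n * y - y‖ := by
            have h3 := norm_mul_le ((1:E) - p n) (x - y)
            have h4 := hqnorm n
            nlinarith [norm_nonneg (x - y), norm_nonneg ((1:E) - p n)]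
    have : dist x y = ‖x - y‖ := dist_eq_norm x y
    linarith
  -- key decomposition inequality
  have hkey : ∀ n, ‖x‖ ≤ max ‖p n * x * p n‖ ‖(1 - p n) * x * (1 - p n)‖
      + 2 * ‖p n * x - x * p n‖ := by
    intro n
    set a := p n * x * p n with hA
    set b := (1 - p n) * x * (1 - p n) with hB
    have hdecomp : x = (a + b) + (p n * x * (1 - p n) + (1 - p n) * x * p n) := by
      rw [hA, hB]; noncomm_ring
    have hc1 : ‖p n * x * (1 - p n)‖ ≤ ‖p n * x - x * p n‖ := by
      have hid : p n * x * (1 - p n) = (p n * x - x * p n) * (1 - p n) := by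
        rw [sub_mul, mul_assoc x, hpq n, mul_zero, sub_zero]
      rw [hid]
      calc ‖(p n * x - x * p n) * (1 - p n)‖
          ≤ ‖p n * x - x * p n‖ * ‖1 - p n‖ := norm_mul_le _ _
        _ ≤ ‖p n * x - x * p n‖ := by
            nlinarith [hqnorm n, norm_nonneg (p n * x - x * p n), norm_nonneg ((1:E) - p n)]
    have hc2 : ‖(1 - p n) * x * p n‖ ≤ ‖p n * x - x * p n‖ := by
      have hid : (1 - p n) * x * p n = (1 - p n) * (x * p n - p n * x) := by
        have h0 : (1 - p n) * (p n * x) = 0 := by rw [← mul_assoc, hqp n, zero_mul]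
        rw [mul_sub, h0, sub_zero, mul_assoc]
      rw [hid]
      calc ‖(1 - p n) * (x * p n - p n * x)‖
          ≤ ‖1 - p n‖ * ‖x * p n - p n * x‖ := norm_mul_le _ _
        _ ≤ ‖x * p n - p n * x‖ := by
            nlinarith [hqnorm n, norm_nonneg (x * p n - p n * x), norm_nonneg ((1:E) - p n)]
        _ = ‖p n * x - x * p n‖ := norm_sub_rev _ _
    have horth : ‖a + b‖ ≤ max ‖a‖ ‖b‖ := by
      apply aux_norm_add_le_max
      · have hsb : star b = (1 - p n) * star x * (1 - p n) := by
          rw [hB, star_mul, star_mul, hqsa n, mul_assoc]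
        rw [hsb, hA]
        have hpq' : ∀ z : E, p n * ((1 - p n) * z) = 0 := fun z => by
          rw [← mul_assoc, hpq n, zero_mul]
        simp only [mul_assoc, hpq', mul_zero]
      · have hsa : star a = p n * star x * p n := by
          rw [hA, star_mul, star_mul, (hproj n).2, mul_assoc]
        rw [hsa, hB]
        have hpq' : ∀ z : E, p n * ((1 - p n) * z) = 0 := fun z => by
          rw [← mul_assoc, hpq n, zero_mul]
        simp only [mul_assoc, hpq', mul_zero]
    calc ‖x‖ = ‖(a + b) + (p n * x * (1 - p n) + (1 - p n) * x * p n)‖ := by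
          rw [← hdecomp]
      _ ≤ ‖a + b‖ + ‖p n * x * (1 - p n) + (1 - p n) * x * p n‖ := norm_add_le _ _
      _ ≤ ‖a + b‖ + (‖p n * x * (1 - p n)‖ + ‖(1 - p n) * x * p n‖) := by
          linarith [norm_add_le (p n * x * (1 - p n)) ((1 - p n) * x * p n)]
      _ ≤ max ‖a‖ ‖b‖ + 2 * ‖p n * x - x * p n‖ := by linarith
  set L := Filter.liminf (fun n => ‖p n * x * p n‖) atTop with hL
  -- the two directions
  have hge : max L d ≤ ‖x‖ := by
    apply max_le
    · exact liminf_le_of_frequently_le (Frequently.of_forall ha_le)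
        (isBoundedUnder_of ⟨0, fun n => norm_nonneg _⟩)
    · calc d ≤ dist x 0 := Metric.infDist_le_dist_of_mem I.zero_mem
        _ = ‖x‖ := by rw [dist_zero_right]
  have hle : ‖x‖ ≤ max L d := by
    apply le_of_forall_pos_le_add
    intro ε hε
    have hfreq : ∃ᶠ n in atTop, ‖p n * x * p n‖ < L + ε / 3 := by
      apply frequently_lt_of_liminf_lt
      · exact Filter.isCoboundedUnder_ge_of_le atTop ha_le
      · linarith
    have hev1 := hb_upper (ε / 3) (by linarith)
    have hev2 : ∀ᶠ n in atTop, ‖p n * x - x * p n‖ < ε / 3 :=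
      (hqc x).eventually (gt_mem_nhds (by linarith : (0:ℝ) < ε / 3))
    obtain ⟨n, h1, h2, h3⟩ := (hfreq.and_eventually (hev1.and hev2)).exists
    have h4 := hkey n
    have h5 : max ‖p n * x * p n‖ ‖(1 - p n) * x * (1 - p n)‖
        ≤ max (L + ε / 3) (d + ε / 3) := max_le_max h1.le h2.le
    have h6 : max (L + ε / 3) (d + ε / 3) = max L d + ε / 3 := by
      rcases le_total L d with h | h
      · rw [max_eq_right h, max_eq_right (by linarith)]
      · rw [max_eq_left h, max_eq_left (by linarith)]
    linarith [h4, h5, h6.le, h3]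
  linarith [hge, hle, le_antisymm hle hge]
end

section
/- Let R be a C*-algebra which is residually finite dimensional, witnessed by surjective *-homomorphisms π_n : R → A_n onto unital finite dimensional C*-algebras A_n with ⊕_n π_n faithful. Define π̃_n : M(R) → A_n on the multiplier algebra by π̃_n(x) = π_n(x e_n), where e_n ∈ R is any lift of the unit of A_n. Then each π̃_n is a *-homomorphism extending π_n and ⊕_n π̃_n : M(R) → Π_n A_n is injective; in particular M(R) is residually finite dimensional. -/
open scoped CStarAlgebra

set_option maxHeartbeats 1000000

/-- If `R` is residually finite dimensional, witnessed by surjections `π n` onto unital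
finite dimensional `C*`-algebras `S n ⊆ Mₘₙ(ℂ)` which jointly separate points, then the
maps `π̃ n (x) = π n (x * e n)` (where `e n` lifts the unit of `S n`) are
`*`-homomorphisms on the multiplier algebra `M(R)` extending `π n`, and they jointly
separate the points of `M(R)`; in particular `M(R)` is residually finite dimensional.
Here `M(R)` is formalized as a unital `C*`-algebra `M` containing `R` (via `ι`) as an
essential ideal. -/
theorem multiplier_algebra_rfd {R M : Type*}
    [NonUnitalCStarAlgebra R] [CStarAlgebra M]
    (ι : R →⋆ₙₐ[ℂ] M) (hιisom : Isometry ι)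
    (hideal : ∀ (x : M) (r : R), x * ι r ∈ Set.range ι ∧ ι r * x ∈ Set.range ι)
    (hess : ∀ J : TwoSidedIdeal M, IsClosed (J : Set M) → J ≠ ⊥ →
      ∃ y, y ∈ J ∧ y ∈ Set.range ι ∧ y ≠ 0)
    (m : ℕ → ℕ) (S : ∀ n, StarSubalgebra ℂ (MatOp (m n)))
    (π : ∀ n, R →⋆ₙₐ[ℂ] MatOp (m n))
    (hsurj : ∀ n, Set.range (π n) = (S n : Set (MatOp (m n))))
    (hfaithful : ∀ r : R, (∀ n, π n r = 0) → r = 0)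
    (e : ℕ → R) (he : ∀ n, π n (e n) = 1) :
    ∃ πext : ∀ n, M →⋆ₐ[ℂ] MatOp (m n),
      (∀ (n : ℕ) (r : R), πext n (ι r) = π n r) ∧
      (∀ (n : ℕ) (x : M) (r : R), ι r = x * ι (e n) → πext n x = π n r) ∧
      ∀ x : M, (∀ n, πext n x = 0) → x = 0 := by
  classical
  have injι : Function.Injective ι := hιisom.injective
  -- the canonical lift `r n x` with `ι (r n x) = x * ι (e n)`
  set r : ∀ _ : ℕ, M → R := fun n x => ((hideal x (e n)).1).choose with hrdef
  have hr : ∀ n x, ι (r n x) = x * ι (e n) := fun n x => ((hideal x (e n)).1).choose_spec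
  -- the right-sided lift `r' n x` with `ι (r' n x) = ι (e n) * x`
  set r' : ∀ _ : ℕ, M → R := fun n x => ((hideal x (e n)).2).choose with hr'def
  have hr' : ∀ n x, ι (r' n x) = ι (e n) * x := fun n x => ((hideal x (e n)).2).choose_spec
  -- key kernel lemma (left): if `ι u = x * ι v` and `π n v = 0` then `π n u = 0`
  have Z : ∀ (n : ℕ) (x : M) (u v : R), ι u = x * ι v → π n v = 0 → π n u = 0 := by
    intro n x u v hu hv
    obtain ⟨w, hw⟩ := (hideal (star x * x) v).1
    have h1 : ι (star u * u) = ι (star v * w) := by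
      rw [map_mul, map_mul, map_star, map_star, hu, hw, star_mul]
      rw [← map_star, mul_assoc, mul_assoc]
    have h2 : star u * u = star v * w := injι h1
    have h3 : star (π n u) * π n u = 0 := by
      rw [← map_star, ← map_mul, h2, map_mul, map_star, hv, star_zero (R := MatOp (m n)), zero_mul]
    exact (CStarRing.star_mul_self_eq_zero_iff _).mp h3
  -- key kernel lemma (right)
  have Z' : ∀ (n : ℕ) (x : M) (u v : R), ι u = ι v * x → π n v = 0 → π n u = 0 := by
    intro n x u v hu hv
    obtain ⟨w, hw⟩ := (hideal (x * star x) (star v)).1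
    have h1 : ι (u * star u) = ι (v * w) := by
      rw [map_mul, map_mul, map_star, hu, hw, star_mul, ← map_star]
      rw [mul_assoc, mul_assoc]
    have h2 : u * star u = v * w := injι h1
    have h3 : π n u * star (π n u) = 0 := by
      rw [← map_star, ← map_mul, h2, map_mul, hv, zero_mul]
    exact (CStarRing.mul_star_self_eq_zero_iff _).mp h3
  -- left multiplication rule
  have K : ∀ (n : ℕ) (x : M) (t s : R), ι t = x * ι s →
      π n t = π n (r n x) * π n s := by
    intro n x t s ht
    have h0 : π n (t - r n x * s) = 0 := by
      refine Z n x _ (s - e n * s) ?_ ?_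
      · rw [map_sub, map_sub, map_mul, ht, map_mul, hr, mul_sub, mul_assoc]
      · rw [map_sub, map_mul, he, one_mul, sub_self]
    have := sub_eq_zero.mp (by rwa [map_sub] at h0)
    rw [this, map_mul]
  -- right multiplication rule
  have K' : ∀ (n : ℕ) (x : M) (t s : R), ι t = ι s * x →
      π n t = π n s * π n (r' n x) := by
    intro n x t s ht
    have h0 : π n (t - s * r' n x) = 0 := by
      refine Z' n x _ (s - s * e n) ?_ ?_
      · rw [map_sub, map_sub, map_mul, ht, map_mul, hr', sub_mul, mul_assoc]
      · rw [map_sub, map_mul, he, mul_one, sub_self]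
    have := sub_eq_zero.mp (by rwa [map_sub] at h0)
    rw [this, map_mul]
  -- the two lifts agree after applying `π n`
  have GF : ∀ (n : ℕ) (x : M), π n (r' n x) = π n (r n x) := by
    intro n x
    have h1 : ι (r' n x * e n) = ι (e n * r n x) := by
      rw [map_mul, map_mul, hr', hr, mul_assoc]
    have h2 : r' n x * e n = e n * r n x := injι h1
    have := congrArg (π n) h2
    rwa [map_mul, map_mul, he, mul_one, one_mul] at this
  -- the extension as a bare function
  set F : ∀ n : ℕ, M → MatOp (m n) := fun n x => π n (r n x) with hFdef
  have F_one : ∀ n, F n 1 = 1 := by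
    intro n
    have : r n 1 = e n := injι (by rw [hr, one_mul])
    simp only [hFdef, this, he]
  have F_mul : ∀ n x y, F n (x * y) = F n x * F n y := by
    intro n x y
    have h1 : ι (r n (x * y)) = x * ι (r n y) := by rw [hr, hr, mul_assoc]
    exact K n x _ _ h1
  have F_add : ∀ n x y, F n (x + y) = F n x + F n y := by
    intro n x y
    have : r n (x + y) = r n x + r n y := injι (by rw [map_add, hr, hr, hr, add_mul])
    simp only [hFdef, this, map_add]
  have F_smul : ∀ (n) (c : ℂ) (x : M), F n (c • x) = c • F n x := by
    intro n c x
    have : r n (c • x) = c • r n x := injι (by rw [map_smul, hr, hr, smul_mul_assoc])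
    simp only [hFdef, this, map_smul]
  have F_star : ∀ n x, F n (star x) = star (F n x) := by
    intro n x
    have h1 : ι (star (r n x)) = ι (star (e n)) * star x := by
      rw [map_star, map_star, hr, star_mul]
    have h2 : π n (star (r n x)) = π n (star (e n)) * π n (r' n (star x)) :=
      K' n (star x) _ _ h1
    have h3 : π n (star (e n)) = 1 := by rw [map_star, he, star_one]
    rw [h3, one_mul, GF] at h2
    exact ((map_star (π n) (r n x)).symm.trans h2).symm
  have F_zero : ∀ n, F n 0 = 0 := by
    intro n
    have : r n 0 = 0 := injι (by rw [hr, zero_mul, map_zero])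
    simp only [hFdef, this, map_zero]
  -- bundle as star algebra homomorphisms
  set πext : ∀ n, M →⋆ₐ[ℂ] MatOp (m n) := fun n =>
    { toFun := F n
      map_one' := F_one n
      map_mul' := F_mul n
      map_zero' := F_zero n
      map_add' := F_add n
      commutes' := by
        intro c
        rw [Algebra.algebraMap_eq_smul_one, Algebra.algebraMap_eq_smul_one]
        show F n (c • (1 : M)) = c • (1 : MatOp (m n))
        rw [F_smul, F_one]
      map_star' := F_star n } with hπext
  have hπext_apply : ∀ n x, πext n x = F n x := fun n x => rfl
  refine ⟨πext, ?_, ?_, ?_⟩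
  · -- extends π n
    intro n s
    have : r n (ι s) = s * e n := injι (by rw [hr, map_mul])
    rw [hπext_apply, hFdef]
    simp only [this, map_mul, he, mul_one]
  · -- agrees with the formula
    intro n x s hs
    have : r n x = s := injι (by rw [hr, hs])
    rw [hπext_apply, hFdef]
    simp only [this]
  · -- jointly injective
    intro x hx
    by_contra hx0
    -- the common kernel is a closed two-sided ideal
    set J : TwoSidedIdeal M := TwoSidedIdeal.mk' {y : M | ∀ n, πext n y = 0}
      (fun n => map_zero (πext n))
      (fun {a b} ha hb n => by rw [map_add, ha n, hb n, add_zero])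
      (fun {a} ha n => by rw [map_neg, ha n, neg_zero])
      (fun {a b} hb n => by rw [map_mul, hb n, mul_zero])
      (fun {a b} ha n => by rw [map_mul, ha n, zero_mul]) with hJ
    have hJmem : ∀ y : M, y ∈ J ↔ ∀ n, πext n y = 0 := fun y =>
      TwoSidedIdeal.mem_mk' _ _ _ _ _ _ y
    have hJclosed : IsClosed (J : Set M) := by
      have : (J : Set M) = ⋂ n, (πext n) ⁻¹' {0} := by
        ext y
        simp only [SetLike.mem_coe, hJmem, Set.mem_iInter, Set.mem_preimage,
          Set.mem_singleton_iff]
      rw [this]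
      exact isClosed_iInter fun n =>
        IsClosed.preimage (map_continuous (πext n)) isClosed_singleton
    have hJne : J ≠ ⊥ := by
      intro h
      have hxJ : x ∈ J := (hJmem x).mpr hx
      rw [h, TwoSidedIdeal.mem_bot] at hxJ
      exact hx0 hxJ
    obtain ⟨y, hyJ, ⟨s, hs⟩, hy0⟩ := hess J hJclosed hJne
    have hπs : ∀ n, π n s = 0 := by
      intro n
      have h1 : πext n (ι s) = π n s := by
        have : r n (ι s) = s * e n := injι (by rw [hr, map_mul])
        rw [hπext_apply, hFdef]
        simp only [this, map_mul, he, mul_one]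
      have h2 := (hJmem y).mp hyJ n
      rw [← hs, h1] at h2
      exact h2
    exact hy0 (by rw [← hs, hfaithful s hπs, map_zero])
end
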